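/- arXiv:2108.05858 — 3 statements merged into one kernel-verified Lean document; each statement's English description precedes it below -/
import Mathlib

section
/- Let P and Q be probability measures on ℝ^d with finite second moments, with P absolutely continuous with respect to the Lebesgue measure, and let T̄ be the Brenier map from P to Q, i.e. the P-a.e. unique gradient of a convex function with Q = T̄_# P. Let Γ denote the set of couplings of P and Q. Then the optimal transport problem inf_{γ ∈ Γ} ∫ ‖x − y‖² dγ(x, y) admits a unique minimizer γ̄, and γ̄ is the law of (X, T̄(X)) for X ∼ P; that is, a coupling γ of P and Q is optimal if and only if γ-almost surely Y = T̄(X). -/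
open MeasureTheory Set
open scoped RealInnerProductSpace

noncomputable section

/-- `T` is the gradient of a convex function on all of `ℝ^d`. -/
def IsGradientOfConvex {d : ℕ} (T : EuclideanSpace ℝ (Fin d) → EuclideanSpace ℝ (Fin d)) : Prop :=
  ∃ f : EuclideanSpace ℝ (Fin d) → ℝ,
    ConvexOn ℝ Set.univ f ∧ ∀ x, HasGradientAt f (T x) x

/-- `γ` is a coupling of `P` and `Q`: a probability measure on the product with the
prescribed marginals. -/
def IsCoupling {d : ℕ} (γ : Measure (EuclideanSpace ℝ (Fin d) × EuclideanSpace ℝ (Fin d)))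
    (P Q : Measure (EuclideanSpace ℝ (Fin d))) : Prop :=
  IsProbabilityMeasure γ ∧ γ.map Prod.fst = P ∧ γ.map Prod.snd = Q

/-- The quadratic transport cost of a coupling. -/
def transportCost {d : ℕ}
    (γ : Measure (EuclideanSpace ℝ (Fin d) × EuclideanSpace ℝ (Fin d))) : ℝ :=
  ∫ p, ‖p.1 - p.2‖ ^ 2 ∂γ


section BrenierAux

open InnerProductSpace

set_option linter.unusedSectionVars false


set_option linter.unusedSectionVars false

variable {E : Type*} [NormedAddCommGroup E] [InnerProductSpace ℝ E] [CompleteSpace E]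

/-- Subgradient inequality for a convex function with gradient `T`. -/
lemma brenier_grad_ineq {f : E → ℝ} {T : E → E}
    (hf : ConvexOn ℝ Set.univ f) (hT : ∀ x, HasGradientAt f (T x) x) (a b : E) :
    ⟪T a, b - a⟫ + f a ≤ f b := by
  set c : ℝ → E := fun t => t • (b - a) + a with hc
  have hceq : c = fun t => AffineMap.lineMap a b t := by
    funext t; simp [hc, AffineMap.lineMap_apply_module']
  have hconv : ConvexOn ℝ Set.univ (f ∘ c) := by
    rw [hceq]
    have := hf.comp_affineMap (AffineMap.lineMap a b : ℝ →ᵃ[ℝ] E)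
    simpa using this
  have hcd : HasDerivAt c (b - a) 0 := by
    simpa [hc] using ((hasDerivAt_id (0:ℝ)).smul_const (b - a)).add_const a
  have hd : HasDerivAt (f ∘ c) ⟪T a, b - a⟫ 0 := by
    have h0 : c 0 = a := by simp [hc]
    have := (h0 ▸ (hT a).hasFDerivAt : HasFDerivAt f (toDual ℝ E (T a)) (c 0)).comp_hasDerivAt 0 hcd
    simpa [toDual_apply_apply] using this
  have := hconv.le_slope_of_hasDerivAt (mem_univ (0:ℝ)) (mem_univ (1:ℝ)) one_pos hd
  have h01 : slope (f ∘ c) 0 1 = f b - f a := by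
    simp [slope_def_field, hc, Function.comp]
  rw [h01] at this
  linarith

/-- The set where the (countable) Legendre sup is bounded. -/
def brB (f : E → ℝ) (u : ℕ → E) : Set E := ⋃ (M : ℕ), ⋂ n, {y | ⟪u n, y⟫ - f (u n) ≤ M}

/-- Countable Legendre transform. -/
def brG (f : E → ℝ) (u : ℕ → E) : E → ℝ := fun y => ⨆ n, (⟪u n, y⟫ - f (u n))

variable {f : E → ℝ} {T : E → E} {u : ℕ → E}

lemma brB_bddAbove {y : E} (hy : y ∈ brB f u) :
    BddAbove (Set.range fun n => ⟪u n, y⟫ - f (u n)) := by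
  obtain ⟨M, hM⟩ := Set.mem_iUnion.1 hy
  simp only [Set.mem_iInter, Set.mem_setOf_eq] at hM
  exact ⟨M, by rintro r ⟨n, rfl⟩; exact hM n⟩

lemma le_brG (hd : DenseRange u) (hfc : Continuous f) {y : E} (hy : y ∈ brB f u) (x : E) :
    ⟪x, y⟫ - f x ≤ brG f u y := by
  have hb := brB_bddAbove hy
  refine le_of_forall_sub_le fun ε hε => ?_
  set s : Set E := {z | (⟪x, y⟫ - f x) - ε < ⟪z, y⟫ - f z} with hs
  have hso : IsOpen s :=
    isOpen_lt continuous_const ((continuous_id.inner continuous_const).sub hfc)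
  have hsn : s.Nonempty := ⟨x, by simp [hs]; linarith⟩
  obtain ⟨n, hn⟩ := hd.exists_mem_open hso hsn
  have hle : ⟪u n, y⟫ - f (u n) ≤ brG f u y := le_ciSup hb n
  have := hn
  simp only [hs, Set.mem_setOf_eq] at this
  linarith

lemma brG_T (hf : ConvexOn ℝ Set.univ f) (hT : ∀ x, HasGradientAt f (T x) x)
    (hd : DenseRange u) (x : E) :
    T x ∈ brB f u ∧ brG f u (T x) = ⟪x, T x⟫ - f x := by
  have hfc : Continuous f := continuous_iff_continuousAt.2 fun z => (hT z).continuousAt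
  have key : ∀ z : E, ⟪z, T x⟫ - f z ≤ ⟪x, T x⟫ - f x := by
    intro z
    have := brenier_grad_ineq hf hT x z
    have h2 : ⟪T x, z - x⟫ = ⟪z, T x⟫ - ⟪x, T x⟫ := by
      rw [inner_sub_right, real_inner_comm (T x) z, real_inner_comm (T x) x]
    linarith
  obtain ⟨M, hM⟩ := exists_nat_ge (⟪x, T x⟫ - f x)
  have hmem : T x ∈ brB f u :=
    Set.mem_iUnion.2 ⟨M, Set.mem_iInter.2 fun n => le_trans (key (u n)) hM⟩
  exact ⟨hmem, le_antisymm (ciSup_le fun n => key (u n)) (le_brG hd hfc hmem x)⟩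

lemma eq_T_of_eq (hf : ConvexOn ℝ Set.univ f) (hT : ∀ x, HasGradientAt f (T x) x)
    (hd : DenseRange u) {x y : E} (hy : y ∈ brB f u)
    (heq : f x + brG f u y - ⟪x, y⟫ = 0) : y = T x := by
  have hfc : Continuous f := continuous_iff_continuousAt.2 fun z => (hT z).continuousAt
  have hmax : IsLocalMax (fun z => ⟪z, y⟫ - f z) x := by
    refine Filter.Eventually.of_forall fun z => ?_
    have h1 := le_brG hd hfc hy z
    show ⟪z, y⟫ - f z ≤ ⟪x, y⟫ - f x
    linarith
  have hder : HasFDerivAt (fun z => ⟪z, y⟫ - f z) (toDual ℝ E y - toDual ℝ E (T x)) x := by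
    have h1 : HasFDerivAt (fun z : E => ⟪z, y⟫) (toDual ℝ E y) x := by
      have he : (fun z : E => ⟪z, y⟫) = fun z => toDual ℝ E y z := by
        funext z; simp [real_inner_comm]
      rw [he]
      exact (toDual ℝ E y).hasFDerivAt
    exact h1.sub (hT x).hasFDerivAt
  have h0 := hmax.hasFDerivAt_eq_zero hder
  have h1 : toDual ℝ E (y - T x) = 0 := by rw [map_sub]; exact h0
  have h2 := (toDual ℝ E).injective (h1.trans (map_zero (toDual ℝ E)).symm)
  exact sub_eq_zero.1 (by simpa using h2)

section Meas
variable [MeasurableSpace E] [BorelSpace E] [SecondCountableTopology E]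

lemma brenier_T_meas (hT : ∀ x, HasGradientAt f (T x) x) : Measurable T := by
  have : T = fun x => (toDual ℝ E).symm (fderiv ℝ f x) := by
    funext x
    rw [(hT x).hasFDerivAt.fderiv]
    simp
  rw [this]
  exact (toDual ℝ E).symm.continuous.measurable.comp (measurable_fderiv ℝ f)

lemma measurableSet_brB (hfc : Continuous f) : MeasurableSet (brB f u) := by
  refine MeasurableSet.iUnion fun M => MeasurableSet.iInter fun n => ?_
  exact measurableSet_le (((continuous_const.inner continuous_id).sub continuous_const).measurable) measurable_const

lemma measurable_brG (hfc : Continuous f) : Measurable (brG f u) :=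
  Measurable.iSup fun n => ((continuous_const.inner continuous_id).sub continuous_const).measurable

end Meas


lemma brenier_core (d : ℕ) (P Q : Measure (EuclideanSpace ℝ (Fin d)))
    [IsProbabilityMeasure P] [IsProbabilityMeasure Q]
    (hP2 : Integrable (fun x => ‖x‖ ^ 2) P)
    (hQ2 : Integrable (fun x => ‖x‖ ^ 2) Q)
    (Tbar : EuclideanSpace ℝ (Fin d) → EuclideanSpace ℝ (Fin d))
    (f : EuclideanSpace ℝ (Fin d) → ℝ) (hf : ConvexOn ℝ Set.univ f)
    (hT : ∀ x, HasGradientAt f (Tbar x) x) (hpush : Q = P.map Tbar)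
    (γ : Measure (EuclideanSpace ℝ (Fin d) × EuclideanSpace ℝ (Fin d)))
    (hγ : IsCoupling γ P Q) :
    transportCost (P.map (fun x => (x, Tbar x))) ≤ transportCost γ ∧
    (transportCost γ = transportCost (P.map (fun x => (x, Tbar x))) ↔
      ∀ᵐ p ∂γ, p.2 = Tbar p.1) := by
  classical
  obtain ⟨hγprob, hγ1, hγ2⟩ := hγ
  have hfc : Continuous f := continuous_iff_continuousAt.2 fun z => (hT z).continuousAt
  have hTm : Measurable Tbar := brenier_T_meas hT
  set u : ℕ → EuclideanSpace ℝ (Fin d) := TopologicalSpace.denseSeq _ with hu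
  have hd : DenseRange u := TopologicalSpace.denseRange_denseSeq _
  set g : EuclideanSpace ℝ (Fin d) → ℝ := brG f u with hg
  have hgm : Measurable g := measurable_brG hfc
  set ι : EuclideanSpace ℝ (Fin d) → EuclideanSpace ℝ (Fin d) × EuclideanSpace ℝ (Fin d) :=
    fun x => (x, Tbar x) with hι
  have hιm : Measurable ι := measurable_id.prodMk hTm
  -- integrabilities w.r.t. P
  have hPnorm : Integrable (fun x => ‖x‖) P := by
    refine ((integrable_const (1:ℝ)).add hP2).mono
      continuous_norm.aestronglyMeasurable (Filter.Eventually.of_forall fun x => ?_)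
    have h1 : (0:ℝ) ≤ 1 + ‖x‖ ^ 2 := by positivity
    simp only [Real.norm_eq_abs, abs_of_nonneg (norm_nonneg x), abs_of_nonneg h1,
      Pi.add_apply]
    nlinarith [norm_nonneg x]
  have hTP2 : Integrable (fun x => ‖Tbar x‖ ^ 2) P := by
    rw [hpush] at hQ2
    exact (integrable_map_measure (continuous_norm.pow 2).aestronglyMeasurable
      hTm.aemeasurable).1 hQ2
  have hinnerTPm : AEStronglyMeasurable (fun x => ⟪x, Tbar x⟫) P :=
    (measurable_id.inner hTm).aestronglyMeasurable
  have hinnerTP : Integrable (fun x => ⟪x, Tbar x⟫) P := by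
    refine (hP2.add hTP2).mono hinnerTPm (Filter.Eventually.of_forall fun x => ?_)
    have h1 := abs_real_inner_le_norm x (Tbar x)
    have h2 : (0:ℝ) ≤ ‖x‖ ^ 2 + ‖Tbar x‖ ^ 2 := by positivity
    simp only [Real.norm_eq_abs, abs_of_nonneg h2, Pi.add_apply]
    rw [abs_le]
    constructor <;> nlinarith [sq_nonneg (‖x‖ - ‖Tbar x‖), abs_le.1 h1,
      mul_nonneg (norm_nonneg x) (norm_nonneg (Tbar x))]
  have hfP : Integrable f P := by
    refine (((integrable_const (|f 0|)).add (hPnorm.const_mul ‖Tbar 0‖)).add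
      (hTP2.add hP2)).mono hfc.aestronglyMeasurable (Filter.Eventually.of_forall fun x => ?_)
    have hub : f x ≤ f 0 + ⟪x, Tbar x⟫ := by
      have := brenier_grad_ineq hf hT x 0
      have h2 : ⟪Tbar x, 0 - x⟫ = -⟪x, Tbar x⟫ := by
        rw [zero_sub, inner_neg_right, real_inner_comm]
      linarith
    have hlb : f 0 + ⟪Tbar 0, x⟫ ≤ f x := by
      have h0 := brenier_grad_ineq hf hT 0 x
      rw [sub_zero] at h0
      linarith
    have h3 : ⟪x, Tbar x⟫ ≤ ‖Tbar x‖ ^ 2 + ‖x‖ ^ 2 := by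
      have habs := abs_real_inner_le_norm x (Tbar x)
      nlinarith [sq_nonneg (‖x‖ - ‖Tbar x‖), (abs_le.1 habs).2, le_abs_self ⟪x, Tbar x⟫,
        mul_nonneg (norm_nonneg x) (norm_nonneg (Tbar x))]
    have h4 : |⟪Tbar 0, x⟫| ≤ ‖Tbar 0‖ * ‖x‖ := abs_real_inner_le_norm (Tbar 0) x
    have h5 : (0:ℝ) ≤ ‖Tbar x‖ ^ 2 + ‖x‖ ^ 2 := by positivity
    have h4a := (abs_le.1 h4).1
    have h4b := (abs_le.1 h4).2
    simp only [Real.norm_eq_abs, Pi.add_apply]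
    rw [abs_of_nonneg (by positivity : (0:ℝ) ≤ |f 0| + ‖Tbar 0‖ * ‖x‖ + (‖Tbar x‖ ^ 2 + ‖x‖ ^ 2))]
    rw [abs_le]
    have hm : (0:ℝ) ≤ ‖Tbar 0‖ * ‖x‖ := mul_nonneg (norm_nonneg _) (norm_nonneg _)
    constructor
    · linarith [neg_abs_le (f 0)]
    · linarith [le_abs_self (f 0)]
  have hgT : ∀ x, g (Tbar x) = ⟪x, Tbar x⟫ - f x := fun x => (brG_T hf hT hd x).2
  have hgQ : Integrable g Q := by
    rw [hpush]
    refine (integrable_map_measure hgm.aestronglyMeasurable hTm.aemeasurable).2 ?_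
    have : (g ∘ Tbar) = fun x => ⟪x, Tbar x⟫ - f x := funext fun x => hgT x
    rw [this]
    exact hinnerTP.sub hfP
  -- integrabilities w.r.t. γ
  have hI1 : Integrable (fun p => ‖p.1‖ ^ 2) γ := by
    have := hP2; rw [← hγ1] at this
    exact (integrable_map_measure (continuous_norm.pow 2).aestronglyMeasurable
      measurable_fst.aemeasurable).1 this
  have hI2 : Integrable (fun p => ‖p.2‖ ^ 2) γ := by
    have := hQ2; rw [← hγ2] at this
    exact (integrable_map_measure (continuous_norm.pow 2).aestronglyMeasurable
      measurable_snd.aemeasurable).1 this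
  have hIinner : Integrable (fun p => ⟪p.1, p.2⟫)
      (γ : Measure (EuclideanSpace ℝ (Fin d) × EuclideanSpace ℝ (Fin d))) := by
    refine (hI1.add hI2).mono continuous_inner.aestronglyMeasurable
      (Filter.Eventually.of_forall fun p => ?_)
    have h1 := abs_real_inner_le_norm p.1 p.2
    have h2 : (0:ℝ) ≤ ‖p.1‖ ^ 2 + ‖p.2‖ ^ 2 := by positivity
    simp only [Real.norm_eq_abs, abs_of_nonneg h2, Pi.add_apply]
    nlinarith [norm_nonneg p.1, norm_nonneg p.2]
  have hIf : Integrable (fun p => f p.1) γ := by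
    have := hfP; rw [← hγ1] at this
    exact (integrable_map_measure hfc.aestronglyMeasurable measurable_fst.aemeasurable).1 this
  have hIg : Integrable (fun p => g p.2) γ := by
    have := hgQ; rw [← hγ2] at this
    exact (integrable_map_measure hgm.aestronglyMeasurable measurable_snd.aemeasurable).1 this
  set h : EuclideanSpace ℝ (Fin d) × EuclideanSpace ℝ (Fin d) → ℝ :=
    fun p => f p.1 + g p.2 - ⟪p.1, p.2⟫ with hh
  have hIh : Integrable h γ := (hIf.add hIg).sub hIinner
  -- a.e. p.2 ∈ B
  have haeB : ∀ᵐ p ∂γ, p.2 ∈ brB f u := by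
    have hBm : MeasurableSet (brB f u : Set (EuclideanSpace ℝ (Fin d))) := measurableSet_brB hfc
    have hempty : Tbar ⁻¹' (brB f u)ᶜ = ∅ := by
      ext x; simp [Set.mem_preimage, (brG_T hf hT hd x).1]
    refine (ae_iff).2 ?_
    have hset : {p : EuclideanSpace ℝ (Fin d) × EuclideanSpace ℝ (Fin d) |
        ¬ p.2 ∈ brB f u} = Prod.snd ⁻¹' (brB f u)ᶜ := rfl
    rw [hset, ← Measure.map_apply measurable_snd hBm.compl, hγ2, hpush,
      Measure.map_apply hTm hBm.compl, hempty]
    simp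
  have hae0 : 0 ≤ᵐ[γ] h := by
    filter_upwards [haeB] with p hp
    have := le_brG hd hfc hp p.1
    simp only [hh, Pi.zero_apply]
    linarith
  -- integral identities
  have hintf : ∫ p, f p.1 ∂γ = ∫ x, f x ∂P := by
    rw [← hγ1, integral_map measurable_fst.aemeasurable hfc.aestronglyMeasurable]
  have hintg : ∫ p, g p.2 ∂γ = ∫ y, g y ∂Q := by
    rw [← hγ2, integral_map measurable_snd.aemeasurable hgm.aestronglyMeasurable]
  have hintgQ : ∫ y, g y ∂Q = ∫ x, ⟪x, Tbar x⟫ ∂P - ∫ x, f x ∂P := by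
    rw [hpush, integral_map hTm.aemeasurable hgm.aestronglyMeasurable]
    have : (fun x => g (Tbar x)) = fun x => ⟪x, Tbar x⟫ - f x := funext fun x => hgT x
    rw [this, integral_sub hinnerTP hfP]
  have hinth : ∫ p, h p ∂γ = ∫ x, ⟪x, Tbar x⟫ ∂P - ∫ p, ⟪p.1, p.2⟫ ∂γ := by
    have hIA : Integrable (fun p => f p.1 + g p.2) γ := hIf.add hIg
    simp only [hh]
    rw [integral_sub hIA hIinner, integral_add hIf hIg, hintf, hintg, hintgQ]
    ring
  -- cost identities
  have hcost : ∀ (γ' : Measure (EuclideanSpace ℝ (Fin d) × EuclideanSpace ℝ (Fin d))),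
      γ'.map Prod.fst = P → γ'.map Prod.snd = Q →
      Integrable (fun p => ‖p.1‖ ^ 2) γ' → Integrable (fun p => ‖p.2‖ ^ 2) γ' →
      Integrable (fun p => ⟪p.1, p.2⟫) γ' →
      transportCost γ' = (∫ x, ‖x‖ ^ 2 ∂P) + (∫ y, ‖y‖ ^ 2 ∂Q)
        - 2 * ∫ p, ⟪p.1, p.2⟫ ∂γ' := by
    intro γ' h1 h2 i1 i2 i3
    have hpt : ∀ p : EuclideanSpace ℝ (Fin d) × EuclideanSpace ℝ (Fin d),
        ‖p.1 - p.2‖ ^ 2 = ‖p.1‖ ^ 2 + ‖p.2‖ ^ 2 - 2 * ⟪p.1, p.2⟫ := by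
      intro p; rw [norm_sub_sq_real]; ring
    have : transportCost γ' = ∫ p, (‖p.1‖ ^ 2 + ‖p.2‖ ^ 2 - 2 * ⟪p.1, p.2⟫) ∂γ' := by
      unfold transportCost
      exact integral_congr_ae (Filter.Eventually.of_forall fun p => hpt p)
    have hiA : Integrable (fun p => ‖p.1‖ ^ 2 + ‖p.2‖ ^ 2) γ' := i1.add i2
    have hiB : Integrable (fun p => 2 * ⟪p.1, p.2⟫) γ' := i3.const_mul 2
    rw [this, integral_sub hiA hiB, integral_add i1 i2, integral_const_mul]
    have e1 : ∫ p, ‖p.1‖ ^ 2 ∂γ' = ∫ x, ‖x‖ ^ 2 ∂P := by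
      rw [← h1, integral_map measurable_fst.aemeasurable
        (f := fun x : EuclideanSpace ℝ (Fin d) => ‖x‖ ^ 2)
        (continuous_norm.pow 2).aestronglyMeasurable]
    have e2 : ∫ p, ‖p.2‖ ^ 2 ∂γ' = ∫ y, ‖y‖ ^ 2 ∂Q := by
      rw [← h2, integral_map measurable_snd.aemeasurable
        (f := fun x : EuclideanSpace ℝ (Fin d) => ‖x‖ ^ 2)
        (continuous_norm.pow 2).aestronglyMeasurable]
    rw [e1, e2]
  -- the candidate coupling and its facts
  have hγb1 : (P.map ι).map Prod.fst = P := by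
    rw [Measure.map_map measurable_fst hιm]
    simp [Function.comp_def, Measure.map_id, hι]
  have hγb2 : (P.map ι).map Prod.snd = Q := by
    rw [Measure.map_map measurable_snd hιm]
    exact hpush.symm
  have hb1 : Integrable (fun p => ‖p.1‖ ^ 2) (P.map ι) := by
    refine (integrable_map_measure ((continuous_norm.pow 2).comp continuous_fst).aestronglyMeasurable hιm.aemeasurable).2 ?_
    simpa [Function.comp_def] using hP2
  have hb2 : Integrable (fun p => ‖p.2‖ ^ 2) (P.map ι) := by
    refine (integrable_map_measure ((continuous_norm.pow 2).comp continuous_snd).aestronglyMeasurable hιm.aemeasurable).2 ?_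
    simpa [Function.comp_def] using hTP2
  have hb3 : Integrable (fun p => ⟪p.1, p.2⟫) (P.map ι) := by
    refine (integrable_map_measure continuous_inner.aestronglyMeasurable hιm.aemeasurable).2 ?_
    simpa [Function.comp_def] using hinnerTP
  have hbinner : ∫ p, ⟪p.1, p.2⟫ ∂(P.map ι) = ∫ x, ⟪x, Tbar x⟫ ∂P := by
    rw [integral_map hιm.aemeasurable continuous_inner.aestronglyMeasurable]
  have hkey : transportCost γ = transportCost (P.map ι) + 2 * ∫ p, h p ∂γ := by
    rw [hcost γ hγ1 hγ2 hI1 hI2 hIinner, hcost (P.map ι) hγb1 hγb2 hb1 hb2 hb3,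
      hbinner, hinth]
    ring
  have hnonneg : 0 ≤ ∫ p, h p ∂γ := integral_nonneg_of_ae hae0
  constructor
  · rw [hkey]; linarith
  · rw [hkey]
    constructor
    · intro heq
      have hint0 : ∫ p, h p ∂γ = 0 := by linarith
      have hzero : h =ᵐ[γ] 0 := by
        have := (integral_eq_zero_iff_of_nonneg_ae hae0 hIh).1 hint0
        exact this
      filter_upwards [hzero, haeB] with p hp hpB
      exact eq_T_of_eq hf hT hd hpB (by simpa [hh] using hp)
    · intro hae
      have hzero : h =ᵐ[γ] 0 := by
        filter_upwards [hae] with p hp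
        simp only [hh, Pi.zero_apply, hp, hgT p.1]
        ring
      rw [integral_congr_ae hzero]
      simp


end BrenierAux

/-- **Brenier's theorem (optimality).**
If `P, Q` have finite second moments, `P ≪ Leb`, and `T̄` is the Brenier map from `P` to `Q`
(the gradient of a convex function pushing `P` to `Q`), then the optimal transport problem over
couplings of `P` and `Q` has `γ̄ = law (X, T̄ X)` as unique minimizer; equivalently, a coupling
is optimal if and only if `Y = T̄ X` holds almost surely under it. -/
theorem brenier_optimality
    (d : ℕ) (P Q : Measure (EuclideanSpace ℝ (Fin d)))
    [IsProbabilityMeasure P] [IsProbabilityMeasure Q]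
    (hP2 : Integrable (fun x => ‖x‖ ^ 2) P)
    (hQ2 : Integrable (fun x => ‖x‖ ^ 2) Q)
    (hac : P ≪ (volume : Measure (EuclideanSpace ℝ (Fin d))))
    (Tbar : EuclideanSpace ℝ (Fin d) → EuclideanSpace ℝ (Fin d))
    (hTbar : IsGradientOfConvex Tbar) (hpush : Q = P.map Tbar) :
    IsCoupling (P.map (fun x => (x, Tbar x))) P Q ∧
    (∀ γ, IsCoupling γ P Q →
      ((∀ γ', IsCoupling γ' P Q → transportCost γ ≤ transportCost γ') ↔
        γ = P.map (fun x => (x, Tbar x)))) ∧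
    (∀ γ, IsCoupling γ P Q →
      ((∀ γ', IsCoupling γ' P Q → transportCost γ ≤ transportCost γ') ↔
        ∀ᵐ p ∂γ, p.2 = Tbar p.1)) := by
  obtain ⟨f, hf, hT⟩ := hTbar
  have hTm : Measurable Tbar := brenier_T_meas hT
  have hιm : Measurable (fun x => (x, Tbar x)) := measurable_id.prodMk hTm
  have hcpl : IsCoupling (P.map (fun x => (x, Tbar x))) P Q := by
    refine ⟨Measure.isProbabilityMeasure_map hιm.aemeasurable, ?_, ?_⟩
    · rw [Measure.map_map measurable_fst hιm]
      simp [Function.comp_def, Measure.map_id]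
    · rw [Measure.map_map measurable_snd hιm]
      exact hpush.symm
  have core := fun γ hγ => brenier_core d P Q hP2 hQ2 Tbar f hf hT hpush γ hγ
  have heqcoup : ∀ γ, IsCoupling γ P Q → (∀ᵐ p ∂γ, p.2 = Tbar p.1) →
      γ = P.map (fun x => (x, Tbar x)) := by
    intro γ hγ hae
    have hfun : (fun p : EuclideanSpace ℝ (Fin d) × EuclideanSpace ℝ (Fin d) =>
        (p.1, Tbar p.1)) =ᵐ[γ] id := by
      filter_upwards [hae] with p hp
      exact Prod.ext rfl hp.symm
    have h1 : γ.map (fun p : EuclideanSpace ℝ (Fin d) × EuclideanSpace ℝ (Fin d) =>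
        (p.1, Tbar p.1)) = γ := by
      rw [Measure.map_congr hfun, Measure.map_id]
    have h2 : γ.map (fun p : EuclideanSpace ℝ (Fin d) × EuclideanSpace ℝ (Fin d) =>
        (p.1, Tbar p.1)) = P.map (fun x => (x, Tbar x)) := by
      rw [← hγ.2.1, Measure.map_map hιm measurable_fst]
      rfl
    rw [← h1, h2]
  refine ⟨hcpl, ?_, ?_⟩
  · intro γ hγ
    constructor
    · intro hopt
      refine heqcoup γ hγ ?_
      exact (core γ hγ).2.1 (le_antisymm (hopt _ hcpl) (core γ hγ).1)
    · rintro rfl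
      exact fun γ' hγ' => (core γ' hγ').1
  · intro γ hγ
    constructor
    · intro hopt
      exact (core γ hγ).2.1 (le_antisymm (hopt _ hcpl) (core γ hγ).1)
    · intro hae γ' hγ'
      have hC : transportCost γ = transportCost (P.map (fun x => (x, Tbar x))) :=
        (core γ hγ).2.2 hae
      rw [hC]
      exact (core γ' hγ').1
end
end

section
/- Let μ_0⋆ be a probability measure on ℝ^d, absolutely continuous with respect to the Lebesgue measure and supported on a convex set K_0⋆, and let μ_1† be a probability measure supported on a finite subset F_1† of ℝ^d. If T_1 and T_2 are two monotone maps from K_0⋆ to F_1† with (T_1)_# μ_0⋆ = (T_2)_# μ_0⋆ = μ_1†, then T_1 = T_2 μ_0⋆-almost everywhere. -/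
open MeasureTheory Set
open scoped RealInnerProductSpace
open scoped ENNReal

noncomputable section

/-- `T` is monotone on `K`: `⟪x − y, T x − T y⟫ ≥ 0` for all `x, y ∈ K`. -/
def MonotoneMapOn {d : ℕ} (T : EuclideanSpace ℝ (Fin d) → EuclideanSpace ℝ (Fin d))
    (K : Set (EuclideanSpace ℝ (Fin d))) : Prop :=
  ∀ x ∈ K, ∀ y ∈ K, 0 ≤ ⟪x - y, T x - T y⟫

namespace SY

variable {E : Type*} [NormedAddCommGroup E] [InnerProductSpace ℝ E]

def MOn (f : E → E) (K : Set E) : Prop := ∀ x ∈ K, ∀ y ∈ K, 0 ≤ ⟪x - y, f x - f y⟫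

noncomputable def lineInt (f : E → E) (x y : E) : ℝ :=
  ∫ t in (0:ℝ)..1, ⟪y - x, f (x + t • (y - x))⟫

lemma seg_mem {K : Set E} (hK : Convex ℝ K) {x y : E} (hx : x ∈ K) (hy : y ∈ K)
    {t : ℝ} (ht : t ∈ Icc (0:ℝ) 1) : x + t • (y - x) ∈ K := by
  have h : x + t • (y - x) = (1 - t) • x + t • y := by module
  rw [h]
  exact hK hx hy (by linarith [ht.2]) ht.1 (by ring)

lemma gMono {f : E → E} {K : Set E} (hK : Convex ℝ K) (hf : MOn f K) {x y : E}
    (hx : x ∈ K) (hy : y ∈ K) :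
    MonotoneOn (fun t : ℝ => ⟪y - x, f (x + t • (y - x))⟫) (Icc (0:ℝ) 1) := by
  intro s hs t ht hst
  rcases eq_or_lt_of_le hst with rfl | hlt
  · exact le_refl _
  have h0 := hf _ (seg_mem hK hx hy ht) _ (seg_mem hK hx hy hs)
  have hv : (x + t • (y - x)) - (x + s • (y - x)) = (t - s) • (y - x) := by module
  rw [hv, real_inner_smul_left] at h0
  have h3 : 0 ≤ ⟪y - x, f (x + t • (y - x)) - f (x + s • (y - x))⟫ := by
    by_contra hcon
    push_neg at hcon
    nlinarith
  rw [inner_sub_right] at h3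
  simpa using h3

lemma gInt' {f : E → E} {K : Set E} (hK : Convex ℝ K) (hf : MOn f K) {x y : E}
    (hx : x ∈ K) (hy : y ∈ K) {a b : ℝ} (ha : 0 ≤ a) (hab : a ≤ b) (hb : b ≤ 1) :
    IntervalIntegrable (fun t : ℝ => ⟪y - x, f (x + t • (y - x))⟫) volume a b := by
  apply MonotoneOn.intervalIntegrable
  apply (gMono hK hf hx hy).mono
  rw [uIcc_of_le hab]
  exact Icc_subset_Icc ha hb

lemma lineInt_self (f : E → E) (x : E) : lineInt f x x = 0 := by
  simp [lineInt]

lemma lineInt_antisymm (f : E → E) (x y : E) : lineInt f y x = - lineInt f x y := by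
  have key : ∀ t : ℝ, ⟪x - y, f (y + t • (x - y))⟫
      = - ⟪y - x, f (x + (1 - t) • (y - x))⟫ := by
    intro t
    have h1 : y + t • (x - y) = x + (1 - t) • (y - x) := by module
    have h2 : x - y = -(y - x) := by module
    rw [h1, h2, inner_neg_left]
  have : lineInt f y x = ∫ t in (0:ℝ)..1, - ⟪y - x, f (x + (1 - t) • (y - x))⟫ := by
    rw [lineInt]
    exact intervalIntegral.integral_congr (fun t _ => key t)
  rw [this, intervalIntegral.integral_neg]
  congr 1
  have := intervalIntegral.integral_comp_sub_left
    (fun s : ℝ => ⟪y - x, f (x + s • (y - x))⟫) 1 (a := 0) (b := 1)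
  simpa [lineInt] using this

lemma lineInt_ge {f : E → E} {K : Set E} (hK : Convex ℝ K) (hf : MOn f K) {x y : E}
    (hx : x ∈ K) (hy : y ∈ K) : ⟪y - x, f x⟫ ≤ lineInt f x y := by
  have h0 : ∫ t in (0:ℝ)..1, ⟪y - x, f x⟫ = ⟪y - x, f x⟫ := by
    simp
  rw [lineInt, ← h0]
  apply intervalIntegral.integral_mono_on zero_le_one
    (intervalIntegrable_const) (gInt' hK hf hx hy le_rfl zero_le_one le_rfl)
  intro t ht
  have := gMono hK hf hx hy (left_mem_Icc.2 zero_le_one) ht ht.1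
  simpa using this

lemma lineInt_le {f : E → E} {K : Set E} (hK : Convex ℝ K) (hf : MOn f K) {x y : E}
    (hx : x ∈ K) (hy : y ∈ K) : lineInt f x y ≤ ⟪y - x, f y⟫ := by
  have h0 : ∫ t in (0:ℝ)..1, ⟪y - x, f y⟫ = ⟪y - x, f y⟫ := by simp
  have h1 : ⟪y - x, f (x + (1:ℝ) • (y - x))⟫ = ⟪y - x, f y⟫ := by
    norm_num
  rw [lineInt, ← h0]
  apply intervalIntegral.integral_mono_on zero_le_one
    (gInt' hK hf hx hy le_rfl zero_le_one le_rfl) (intervalIntegrable_const)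
  intro t ht
  have := gMono hK hf hx hy ht (right_mem_Icc.2 zero_le_one) ht.2
  simpa [h1] using this

def mid (x y : E) : E := x + (2⁻¹ : ℝ) • (y - x)

lemma mid_mem {K : Set E} (hK : Convex ℝ K) {x y : E} (hx : x ∈ K) (hy : y ∈ K) :
    mid x y ∈ K := seg_mem hK hx hy (by norm_num)

lemma lineInt_mid {f : E → E} {K : Set E} (hK : Convex ℝ K) (hf : MOn f K) {x y : E}
    (hx : x ∈ K) (hy : y ∈ K) :
    lineInt f x y = lineInt f x (mid x y) + lineInt f (mid x y) y := by
  set G : ℝ → ℝ := fun t => ⟪y - x, f (x + t • (y - x))⟫ with hG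
  have hm : mid x y ∈ K := mid_mem hK hx hy
  have e1 : lineInt f x (mid x y) = ∫ t in (0:ℝ)..(2⁻¹:ℝ), G t := by
    have h1 : ∀ t : ℝ, ⟪mid x y - x, f (x + t • (mid x y - x))⟫ = 2⁻¹ * G (t * 2⁻¹) := by
      intro t
      have hd : mid x y - x = (2⁻¹ : ℝ) • (y - x) := by simp [mid]
      have harg : x + t • ((2⁻¹:ℝ) • (y - x)) = x + (t * 2⁻¹) • (y - x) := by module
      rw [hd, harg, real_inner_smul_left]
    rw [lineInt, intervalIntegral.integral_congr (fun t _ => h1 t)]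
    rw [intervalIntegral.integral_const_mul]
    rw [intervalIntegral.integral_comp_mul_right G (by norm_num : (2⁻¹:ℝ) ≠ 0)]
    simp
  have e2 : lineInt f (mid x y) y = ∫ t in (2⁻¹:ℝ)..(1:ℝ), G t := by
    have h1 : ∀ t : ℝ, ⟪y - mid x y, f (mid x y + t • (y - mid x y))⟫
        = 2⁻¹ * G (2⁻¹ * t + 2⁻¹) := by
      intro t
      have hd : y - mid x y = (2⁻¹ : ℝ) • (y - x) := by simp [mid]; module
      have harg : mid x y + t • ((2⁻¹:ℝ) • (y - x)) = x + ((2⁻¹:ℝ) * t + 2⁻¹) • (y - x) := by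
        simp only [mid]; module
      rw [hd, harg, real_inner_smul_left]
    rw [lineInt, intervalIntegral.integral_congr (fun t _ => h1 t)]
    rw [intervalIntegral.integral_const_mul]
    rw [intervalIntegral.integral_comp_mul_add G (by norm_num : (2⁻¹:ℝ) ≠ 0) 2⁻¹]
    norm_num
    ring
  rw [e1, e2, lineInt]
  rw [intervalIntegral.integral_add_adjacent_intervals
    (gInt' hK hf hx hy le_rfl (by norm_num) (by norm_num))
    (gInt' hK hf hx hy (by norm_num) (by norm_num) le_rfl)]


/-- Riemann-sum squeeze: a monotone subgradient of `φ` on `[0,1]` integrates to `φ 1 - φ 0`. -/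
lemma riemann (g φ : ℝ → ℝ) (hg : MonotoneOn g (Icc (0:ℝ) 1))
    (hsub : ∀ s ∈ Icc (0:ℝ) 1, ∀ t ∈ Icc (0:ℝ) 1, φ t + (s - t) * g t ≤ φ s) :
    ∫ t in (0:ℝ)..1, g t = φ 1 - φ 0 := by
  have hint : ∀ a b : ℝ, 0 ≤ a → a ≤ b → b ≤ 1 → IntervalIntegrable g volume a b := by
    intro a b ha hab hb
    exact ((hg.mono (by rw [uIcc_of_le hab]; exact Icc_subset_Icc ha hb))).intervalIntegrable
  have key : ∀ N : ℕ, 1 ≤ N →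
      |(∫ t in (0:ℝ)..1, g t) - (φ 1 - φ 0)| ≤ (1/(N:ℝ)) * (g 1 - g 0) := by
    intro N hN
    have hNpos : (0:ℝ) < N := by exact_mod_cast hN
    set Δ : ℝ := 1/(N:ℝ) with hΔdef
    have hΔpos : 0 < Δ := by positivity
    set a : ℕ → ℝ := fun j => (j : ℝ) / N with ha
    have h0 : a 0 = 0 := by simp [ha]
    have h1 : a N = 1 := by
      show (N:ℝ) / N = 1
      exact div_self (ne_of_gt hNpos)
    have haj : ∀ j : ℕ, j ≤ N → a j ∈ Icc (0:ℝ) 1 := by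
      intro j hj
      constructor
      · positivity
      · rw [div_le_one hNpos]; exact_mod_cast hj
    have hstep : ∀ j : ℕ, a (j+1) - a j = Δ := by
      intro j
      show ((j+1:ℕ):ℝ) / N - (j:ℝ) / N = 1 / N
      push_cast; ring
    have hmono : ∀ j : ℕ, a j ≤ a (j+1) := by
      intro j; nlinarith [hstep j]
    have hsplit : ∑ j ∈ Finset.range N, ∫ t in (a j)..(a (j+1)), g t = ∫ t in (0:ℝ)..1, g t := by
      have := intervalIntegral.sum_integral_adjacent_intervals
        (f := g) (μ := volume) (a := a) (n := N)
        (fun k hk => hint (a k) (a (k+1)) (haj k (le_of_lt hk)).1 (hmono k)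
          (haj (k+1) hk).2)
      rw [h0, h1] at this
      exact this
    have hphisplit : ∑ j ∈ Finset.range N, (φ (a (j+1)) - φ (a j)) = φ 1 - φ 0 := by
      have := Finset.sum_range_sub (fun j => φ (a j)) N
      rw [h0, h1] at this
      exact this
    have hterm : ∀ j ∈ Finset.range N,
        |(∫ t in (a j)..(a (j+1)), g t) - (φ (a (j+1)) - φ (a j))|
          ≤ Δ * g (a (j+1)) - Δ * g (a j) := by
      intro j hj
      rw [Finset.mem_range] at hj
      have hj1 : a j ∈ Icc (0:ℝ) 1 := haj j (le_of_lt hj)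
      have hj2 : a (j+1) ∈ Icc (0:ℝ) 1 := haj (j+1) hj
      have hIlo : Δ * g (a j) ≤ ∫ t in (a j)..(a (j+1)), g t := by
        have hconst : ∫ _t in (a j)..(a (j+1)), g (a j) = Δ * g (a j) := by
          rw [intervalIntegral.integral_const, hstep j, smul_eq_mul]
        rw [← hconst]
        apply intervalIntegral.integral_mono_on (hmono j) intervalIntegrable_const
          (hint _ _ hj1.1 (hmono j) hj2.2)
        intro t ht
        exact hg hj1 ⟨le_trans hj1.1 ht.1, le_trans ht.2 hj2.2⟩ ht.1
      have hIhi : (∫ t in (a j)..(a (j+1)), g t) ≤ Δ * g (a (j+1)) := by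
        have hconst : ∫ _t in (a j)..(a (j+1)), g (a (j+1)) = Δ * g (a (j+1)) := by
          rw [intervalIntegral.integral_const, hstep j, smul_eq_mul]
        rw [← hconst]
        apply intervalIntegral.integral_mono_on (hmono j)
          (hint _ _ hj1.1 (hmono j) hj2.2) intervalIntegrable_const
        intro t ht
        exact hg ⟨le_trans hj1.1 ht.1, le_trans ht.2 hj2.2⟩ hj2 ht.2
      have hplo : Δ * g (a j) ≤ φ (a (j+1)) - φ (a j) := by
        have hs := hsub (a (j+1)) hj2 (a j) hj1
        rw [hstep j] at hs
        linarith
      have hphi : φ (a (j+1)) - φ (a j) ≤ Δ * g (a (j+1)) := by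
        have hs := hsub (a j) hj1 (a (j+1)) hj2
        have hd : a j - a (j+1) = -Δ := by linarith [hstep j]
        rw [hd] at hs
        linarith
      rw [abs_le]
      constructor
      · linarith
      · linarith
    calc |(∫ t in (0:ℝ)..1, g t) - (φ 1 - φ 0)|
        = |∑ j ∈ Finset.range N, ((∫ t in (a j)..(a (j+1)), g t) - (φ (a (j+1)) - φ (a j)))| := by
          rw [Finset.sum_sub_distrib, hsplit, hphisplit]
      _ ≤ ∑ j ∈ Finset.range N, |(∫ t in (a j)..(a (j+1)), g t) - (φ (a (j+1)) - φ (a j))| :=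
          Finset.abs_sum_le_sum_abs _ _
      _ ≤ ∑ j ∈ Finset.range N, (Δ * g (a (j+1)) - Δ * g (a j)) := Finset.sum_le_sum hterm
      _ = Δ * (g 1 - g 0) := by
          rw [Finset.sum_range_sub (fun j => Δ * g (a j)) N, h0, h1]
          ring
  by_contra hne
  have habs : 0 < |(∫ t in (0:ℝ)..1, g t) - (φ 1 - φ 0)| := by
    apply abs_pos.2
    intro h
    exact hne (by linarith [sub_eq_zero.1 h])
  set X := |(∫ t in (0:ℝ)..1, g t) - (φ 1 - φ 0)| with hX
  obtain ⟨N, hNgt⟩ := exists_nat_gt ((g 1 - g 0) / X)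
  have h1 := key (N+1) (by omega)
  have hNpos : (0:ℝ) < ((N+1 : ℕ):ℝ) := by positivity
  have hlt : (1/((N+1:ℕ):ℝ)) * (g 1 - g 0) < X := by
    rw [div_mul_eq_mul_div, one_mul, div_lt_iff₀ hNpos]
    have h2 : (g 1 - g 0) / X < ((N+1:ℕ):ℝ) := by
      push_cast at hNgt ⊢; linarith
    calc g 1 - g 0 = ((g 1 - g 0)/X) * X := by field_simp
      _ < ((N+1:ℕ):ℝ) * X := mul_lt_mul_of_pos_right h2 habs
      _ = X * ((N+1:ℕ):ℝ) := by ring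
  linarith


/-- Local potential: near any point of the closure of `K`, the line integral of a monotone
finitely-valued map is given by a potential. -/
lemma local_potential {f : E → E} {K F : Set E} (hK : Convex ℝ K) (hf : MOn f K)
    (hF : F.Finite) (hmaps : Set.MapsTo f K F) {p : E} (hp : p ∈ closure K) :
    ∃ r > 0, ∃ h : E → ℝ, ∀ x ∈ Metric.ball p r ∩ K, ∀ y ∈ Metric.ball p r ∩ K,
      lineInt f x y = h y - h x := by
  classical
  set R : E → Set E := fun v => {z | z ∈ K ∧ f z = v} with hR
  set V : Set E := {v ∈ F | p ∈ closure (R v)} with hV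
  have hVfin : V.Finite := hF.subset (fun v hv => hv.1)
  have hKcup : K = ⋃ v ∈ F, R v := by
    ext z
    simp only [mem_iUnion, hR, mem_setOf_eq]
    constructor
    · intro hz; exact ⟨f z, hmaps hz, hz, rfl⟩
    · rintro ⟨v, _, hz, _⟩; exact hz
  have hVne : V.Nonempty := by
    rw [hKcup] at hp
    rw [hF.closure_biUnion] at hp
    simp only [mem_iUnion] at hp
    obtain ⟨v, hvF, hvp⟩ := hp
    exact ⟨v, hvF, hvp⟩
  set S : Set E := {v ∈ F | (R v).Nonempty ∧ p ∉ closure (R v)} with hS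
  have hSfin : S.Finite := hF.subset (fun v hv => hv.1)
  set U : Set E := ⋂ v ∈ S, (closure (R v))ᶜ with hU
  have hUopen : IsOpen U := by
    apply hSfin.isOpen_biInter
    intro v _
    exact isClosed_closure.isOpen_compl
  have hpU : p ∈ U := by
    simp only [hU, mem_iInter, mem_compl_iff]
    intro v hv
    exact hv.2.2
  obtain ⟨r, hrpos, hrsub⟩ := Metric.isOpen_iff.1 hUopen p hpU
  have hfV : ∀ q ∈ Metric.ball p r ∩ K, f q ∈ V := by
    rintro q ⟨hqb, hqK⟩
    by_contra hcon
    have hqS : f q ∈ S := by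
      refine ⟨hmaps hqK, ⟨q, hqK, rfl⟩, ?_⟩
      intro hcl
      exact hcon ⟨hmaps hqK, hcl⟩
    have := hrsub hqb
    simp only [hU, mem_iInter, mem_compl_iff] at this
    exact this (f q) hqS (subset_closure ⟨hqK, rfl⟩)
  have hkey : ∀ q ∈ Metric.ball p r ∩ K, ∀ v' ∈ V, 0 ≤ ⟪q - p, f q - v'⟫ := by
    rintro q ⟨hqb, hqK⟩ v' hv'
    have hcl : closure (R v') ⊆ {y | 0 ≤ ⟪q - y, f q - v'⟫} := by
      apply closure_minimal
      · rintro y ⟨hyK, hfy⟩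
        have := hf q hqK y hyK
        rwa [hfy] at this
      · have hcont : Continuous fun y : E => ⟪q - y, f q - v'⟫ :=
          (continuous_const.sub continuous_id).inner continuous_const
        exact isClosed_le continuous_const hcont
    exact hcl hv'.2
  set VF : Finset E := hVfin.toFinset with hVF
  have hVFne : VF.Nonempty := by
    rwa [hVF, Set.Finite.toFinset_nonempty]
  refine ⟨r, hrpos, fun x => VF.sup' hVFne (fun v => ⟪v, x - p⟫), ?_⟩
  rintro x hx y hy
  set w : E := y - x with hw
  set γ : ℝ → E := fun t => x + t • w with hγ
  have hγmem : ∀ t ∈ Icc (0:ℝ) 1, γ t ∈ Metric.ball p r ∩ K := by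
    intro t ht
    exact seg_mem ((convex_ball p r).inter hK) hx hy ht
  set g : ℝ → ℝ := fun t => ⟪w, f (γ t)⟫ with hg
  set φ : ℝ → ℝ := fun t => VF.sup' hVFne (fun v => ⟪v, γ t - p⟫) with hφ
  have hgmono : MonotoneOn g (Icc (0:ℝ) 1) := by
    have := gMono hK hf hx.2 hy.2
    intro s hs t ht hst
    have h2 := this hs ht hst
    simpa [hg, hγ, hw, real_inner_comm] using h2
  have hsub : ∀ s ∈ Icc (0:ℝ) 1, ∀ t ∈ Icc (0:ℝ) 1, φ t + (s - t) * g t ≤ φ s := by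
    intro s hs t ht
    have hγt := hγmem t ht
    have hvV : f (γ t) ∈ VF := by
      rw [hVF, Set.Finite.mem_toFinset]
      exact hfV _ hγt
    have hφt : φ t = ⟪f (γ t), γ t - p⟫ := by
      apply le_antisymm
      · apply Finset.sup'_le
        intro v hv
        rw [hVF, Set.Finite.mem_toFinset] at hv
        have h3 := hkey _ hγt v hv
        rw [inner_sub_right] at h3
        have hc1 : ⟪γ t - p, f (γ t)⟫ = ⟪f (γ t), γ t - p⟫ := real_inner_comm _ _
        have hc2 : ⟪γ t - p, v⟫ = ⟪v, γ t - p⟫ := real_inner_comm _ _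
        linarith
      · exact Finset.le_sup' (fun v => ⟪v, γ t - p⟫) hvV
    have hφs : ⟪f (γ t), γ s - p⟫ ≤ φ s := Finset.le_sup' (fun v => ⟪v, γ s - p⟫) hvV
    have hlin : ⟪f (γ t), γ s - p⟫ = ⟪f (γ t), γ t - p⟫ + (s - t) * ⟪w, f (γ t)⟫ := by
      have : γ s - p = (γ t - p) + (s - t) • w := by
        simp only [hγ]; module
      rw [this, inner_add_right, real_inner_smul_right, real_inner_comm w]
    rw [hφt]
    have : g t = ⟪w, f (γ t)⟫ := rfl
    rw [this]
    linarith [hφs, hlin]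
  have hri := riemann g φ hgmono hsub
  have hγ0 : γ 0 = x := by simp [hγ]
  have hγ1 : γ 1 = y := by simp [hγ, hw]
  have : lineInt f x y = ∫ t in (0:ℝ)..1, g t := rfl
  rw [this, hri, hφ]
  simp only [hγ1, hγ0]

def Cint (f : E → E) (T : E × E × E) : ℝ :=
  lineInt f T.1 T.2.1 + lineInt f T.2.1 T.2.2 + lineInt f T.2.2 T.1

def inK (K : Set E) (T : E × E × E) : Prop := T.1 ∈ K ∧ T.2.1 ∈ K ∧ T.2.2 ∈ K

def tdiam (T : E × E × E) : ℝ :=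
  max (dist T.1 T.2.1) (max (dist T.2.1 T.2.2) (dist T.2.2 T.1))

lemma tdiam_nonneg (T : E × E × E) : 0 ≤ tdiam T :=
  le_trans dist_nonneg (le_max_left _ _)

noncomputable def subdiv (T : E × E × E) : Fin 4 → E × E × E := fun i =>
  match i with
  | 0 => (T.1, mid T.1 T.2.1, mid T.1 T.2.2)
  | 1 => (mid T.1 T.2.1, T.2.1, mid T.2.1 T.2.2)
  | 2 => (mid T.1 T.2.2, mid T.2.1 T.2.2, T.2.2)
  | 3 => (mid T.1 T.2.1, mid T.2.1 T.2.2, mid T.1 T.2.2)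

lemma dist_half {a b c e : E} (h : a - b = (2⁻¹:ℝ) • (c - e)) : dist a b = dist c e / 2 := by
  rw [dist_eq_norm, dist_eq_norm, h, norm_smul]
  rw [Real.norm_eq_abs, abs_of_pos (by norm_num : (0:ℝ) < 2⁻¹)]
  ring

lemma mid_comm (x y : E) : mid x y = mid y x := by
  simp only [mid]; module

lemma subdiv_inK {K : Set E} (hK : Convex ℝ K) {T : E × E × E} (hT : inK K T) (i : Fin 4) :
    inK K (subdiv T i) := by
  obtain ⟨h1, h2, h3⟩ := hT
  fin_cases i
  · exact ⟨h1, mid_mem hK h1 h2, mid_mem hK h1 h3⟩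
  · exact ⟨mid_mem hK h1 h2, h2, mid_mem hK h2 h3⟩
  · exact ⟨mid_mem hK h1 h3, mid_mem hK h2 h3, h3⟩
  · exact ⟨mid_mem hK h1 h2, mid_mem hK h2 h3, mid_mem hK h1 h3⟩

lemma subdiv_diam {T : E × E × E} (i : Fin 4) : tdiam (subdiv T i) ≤ tdiam T / 2 := by
  obtain ⟨x, y, z⟩ := T
  have e1 : dist x (mid x y) = dist x y / 2 := dist_half (by simp only [mid]; module)
  have e2 : dist (mid x y) y = dist x y / 2 := dist_half (by simp only [mid]; module)
  have e3 : dist y (mid y z) = dist y z / 2 := dist_half (by simp only [mid]; module)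
  have e4 : dist (mid y z) z = dist y z / 2 := dist_half (by simp only [mid]; module)
  have e5 : dist z (mid x z) = dist z x / 2 := dist_half (by simp only [mid]; module)
  have e6 : dist (mid x z) x = dist z x / 2 := dist_half (by simp only [mid]; module)
  have e7 : dist (mid x y) (mid x z) = dist y z / 2 := dist_half (by simp only [mid]; module)
  have e7' : dist (mid x z) (mid x y) = dist y z / 2 := by rw [dist_comm]; exact e7
  have e8 : dist (mid y z) (mid x z) = dist y x / 2 := dist_half (by simp only [mid]; module)
  have e8' : dist (mid x z) (mid y z) = dist y x / 2 := by rw [dist_comm]; exact e8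
  have e9 : dist (mid x y) (mid y z) = dist x z / 2 := dist_half (by simp only [mid]; module)
  have e9' : dist (mid y z) (mid x y) = dist x z / 2 := by rw [dist_comm]; exact e9
  have hb1 : dist x y ≤ tdiam (x, y, z) := le_max_left _ _
  have hb2 : dist y z ≤ tdiam (x, y, z) := le_max_of_le_right (le_max_left _ _)
  have hb3 : dist z x ≤ tdiam (x, y, z) := le_max_of_le_right (le_max_right _ _)
  have hb1' : dist y x ≤ tdiam (x, y, z) := by rw [dist_comm]; exact hb1
  have hb3' : dist x z ≤ tdiam (x, y, z) := by rw [dist_comm]; exact hb3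
  fin_cases i
  · show max (dist x (mid x y)) (max (dist (mid x y) (mid x z)) (dist (mid x z) x))
        ≤ tdiam (x, y, z) / 2
    exact max_le (by rw [e1]; linarith) (max_le (by rw [e7]; linarith) (by rw [e6]; linarith))
  · show max (dist (mid x y) y) (max (dist y (mid y z)) (dist (mid y z) (mid x y)))
        ≤ tdiam (x, y, z) / 2
    exact max_le (by rw [e2]; linarith) (max_le (by rw [e3]; linarith) (by rw [e9']; linarith))
  · show max (dist (mid x z) (mid y z)) (max (dist (mid y z) z) (dist z (mid x z)))
        ≤ tdiam (x, y, z) / 2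
    exact max_le (by rw [e8']; linarith) (max_le (by rw [e4]; linarith) (by rw [e5]; linarith))
  · show max (dist (mid x y) (mid y z)) (max (dist (mid y z) (mid x z)) (dist (mid x z) (mid x y)))
        ≤ tdiam (x, y, z) / 2
    exact max_le (by rw [e9]; linarith) (max_le (by rw [e8]; linarith) (by rw [e7']; linarith))

lemma subdiv_fst {T : E × E × E} (i : Fin 4) : dist T.1 (subdiv T i).1 ≤ tdiam T := by
  obtain ⟨x, y, z⟩ := T
  have e1 : dist x (mid x y) = dist x y / 2 := dist_half (by simp only [mid]; module)
  have e2 : dist x (mid x z) = dist x z / 2 := dist_half (by simp only [mid]; module)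
  have hb1 : dist x y ≤ tdiam (x, y, z) := le_max_left _ _
  have hb3 : dist x z ≤ tdiam (x, y, z) := by
    rw [dist_comm]; exact le_max_of_le_right (le_max_right _ _)
  have hd1 : 0 ≤ dist x y := dist_nonneg
  have hd3 : 0 ≤ dist x z := dist_nonneg
  fin_cases i
  · show dist x x ≤ tdiam (x, y, z)
    simpa using tdiam_nonneg (x, y, z)
  · show dist x (mid x y) ≤ tdiam (x, y, z)
    rw [e1]; linarith
  · show dist x (mid x z) ≤ tdiam (x, y, z)
    rw [e2]; linarith
  · show dist x (mid x y) ≤ tdiam (x, y, z)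
    rw [e1]; linarith

lemma Cint_subdiv {f : E → E} {K : Set E} (hK : Convex ℝ K) (hf : MOn f K)
    {T : E × E × E} (hT : inK K T) :
    Cint f T = ∑ i : Fin 4, Cint f (subdiv T i) := by
  obtain ⟨x, y, z⟩ := T
  obtain ⟨hx, hy, hz⟩ := hT
  simp only [Fin.sum_univ_four, Cint, subdiv]
  have hsxy := lineInt_mid hK hf hx hy
  have hsyz := lineInt_mid hK hf hy hz
  have hszx := lineInt_mid hK hf hz hx
  rw [mid_comm z x] at hszx
  rw [hsxy, hsyz, hszx]
  rw [lineInt_antisymm f (mid x y) (mid y z), lineInt_antisymm f (mid x y) (mid x z),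
    lineInt_antisymm f (mid x z) (mid y z)]
  ring

lemma lineInt_triangle {f : E → E} {K F : Set E} [CompleteSpace E] (hK : Convex ℝ K)
    (hf : MOn f K) (hF : F.Finite) (hmaps : Set.MapsTo f K F) {x y z : E}
    (hx : x ∈ K) (hy : y ∈ K) (hz : z ∈ K) :
    lineInt f x y + lineInt f y z + lineInt f z x = 0 := by
  by_contra hC0
  classical
  have hstep_exists : ∀ T, inK K T → ∃ i, |Cint f T| / 4 ≤ |Cint f (subdiv T i)| := by
    intro T hT
    by_contra hcon
    push_neg at hcon
    have habs : |Cint f T| ≤ ∑ i : Fin 4, |Cint f (subdiv T i)| := by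
      rw [Cint_subdiv hK hf hT]; exact Finset.abs_sum_le_sum_abs _ _
    have hlt : ∑ i : Fin 4, |Cint f (subdiv T i)| < ∑ _i : Fin 4, |Cint f T| / 4 :=
      Finset.sum_lt_sum_of_nonempty (by simp) (fun i _ => hcon i)
    rw [Finset.sum_const] at hlt
    simp only [Finset.card_univ, Fintype.card_fin, nsmul_eq_mul] at hlt
    linarith
  set step : E × E × E → E × E × E := fun T =>
    if h : ∃ i, |Cint f T| / 4 ≤ |Cint f (subdiv T i)| then subdiv T h.choose
    else T with hstepdef
  set Tn : ℕ → E × E × E := fun n => step^[n] (x, y, z) with hTndef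
  have hT0 : Tn 0 = (x, y, z) := rfl
  have hTsucc : ∀ n, Tn (n+1) = step (Tn n) := by
    intro n
    simp only [hTndef, Function.iterate_succ_apply']
  set D0 : ℝ := tdiam (x, y, z) with hD0
  set c0 : ℝ := |Cint f (x, y, z)| with hc0
  have hc0pos : 0 < c0 := abs_pos.2 hC0
  have hinv : ∀ n, inK K (Tn n) ∧ tdiam (Tn n) ≤ D0 / 2^n ∧ c0 / 4^n ≤ |Cint f (Tn n)| := by
    intro n
    induction n with
    | zero => exact ⟨⟨hx, hy, hz⟩, by simp [hT0, hD0], by simp [hT0, hc0]⟩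
    | succ n ih =>
      obtain ⟨hiK, hid, hic⟩ := ih
      have hex := hstep_exists (Tn n) hiK
      have hstepn : Tn (n+1) = subdiv (Tn n) hex.choose := by
        rw [hTsucc n, hstepdef]
        simp only [dif_pos hex]
      refine ⟨?_, ?_, ?_⟩
      · rw [hstepn]; exact subdiv_inK hK hiK _
      · rw [hstepn]
        calc tdiam (subdiv (Tn n) hex.choose) ≤ tdiam (Tn n) / 2 := subdiv_diam _
          _ ≤ (D0 / 2^n) / 2 := by linarith
          _ = D0 / 2^(n+1) := by rw [pow_succ]; ring
      · rw [hstepn]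
        calc c0 / 4^(n+1) = (c0 / 4^n) / 4 := by rw [pow_succ]; ring
          _ ≤ |Cint f (Tn n)| / 4 := by linarith
          _ ≤ |Cint f (subdiv (Tn n) hex.choose)| := hex.choose_spec
  have hD0nn : 0 ≤ D0 := tdiam_nonneg _
  have hdrift : ∀ n, dist ((Tn n).1) ((Tn (n+1)).1) ≤ D0 * (1/2)^n := by
    intro n
    obtain ⟨hiK, hid, _⟩ := hinv n
    have hex := hstep_exists (Tn n) hiK
    have hstepn : Tn (n+1) = subdiv (Tn n) hex.choose := by
      rw [hTsucc n, hstepdef]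
      simp only [dif_pos hex]
    rw [hstepn]
    calc dist ((Tn n).1) ((subdiv (Tn n) hex.choose).1) ≤ tdiam (Tn n) := subdiv_fst _
      _ ≤ D0 / 2^n := hid
      _ = D0 * (1/2)^n := by rw [div_pow, one_pow]; ring
  have hcauchy : CauchySeq (fun n => (Tn n).1) :=
    cauchySeq_of_le_geometric (1/2) D0 (by norm_num) hdrift
  obtain ⟨p, hplim⟩ := cauchySeq_tendsto_of_complete hcauchy
  have hpK : p ∈ closure K :=
    mem_closure_of_tendsto hplim (Filter.Eventually.of_forall (fun n => (hinv n).1.1))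
  obtain ⟨r, hrpos, hh, hpot⟩ := local_potential hK hf hF hmaps hpK
  obtain ⟨N1, hN1⟩ := (Metric.tendsto_atTop.1 hplim) (r/3) (by linarith)
  obtain ⟨N2, hN2⟩ := exists_pow_lt_of_lt_one
    (show (0:ℝ) < (r/3)/(D0+1) by positivity) (show (1/2 : ℝ) < 1 by norm_num)
  set n := max N1 N2 with hn
  have hdiam_small : tdiam (Tn n) < r/3 := by
    have h1 : tdiam (Tn n) ≤ D0 / 2^n := (hinv n).2.1
    have h2 : ((1:ℝ)/2)^n ≤ (1/2)^N2 :=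
      pow_le_pow_of_le_one (by norm_num) (by norm_num) (le_max_right N1 N2)
    have h3 : D0 / 2^n = D0 * (1/2)^n := by rw [div_pow, one_pow]; ring
    have h4 : D0 * (1/2)^n ≤ (D0+1) * (1/2)^N2 := by
      have hp1 : (0:ℝ) < (1/2:ℝ)^n := by positivity
      nlinarith
    have h5 : (D0+1) * (1/2)^N2 < (D0+1) * ((r/3)/(D0+1)) := by
      apply mul_lt_mul_of_pos_left hN2 (by positivity)
    have h6 : (D0+1) * ((r/3)/(D0+1)) = r/3 := by field_simp
    linarith
  have hfst : dist ((Tn n).1) p < r/3 := hN1 n (le_max_left N1 N2)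
  have hv1 : (Tn n).1 ∈ Metric.ball p r ∩ K := by
    refine ⟨?_, (hinv n).1.1⟩
    rw [Metric.mem_ball]
    linarith
  have hv2 : (Tn n).2.1 ∈ Metric.ball p r ∩ K := by
    refine ⟨?_, (hinv n).1.2.1⟩
    rw [Metric.mem_ball]
    have hd : dist ((Tn n).1) ((Tn n).2.1) ≤ tdiam (Tn n) := le_max_left _ _
    calc dist ((Tn n).2.1) p ≤ dist ((Tn n).2.1) ((Tn n).1) + dist ((Tn n).1) p :=
          dist_triangle _ _ _
      _ = dist ((Tn n).1) ((Tn n).2.1) + dist ((Tn n).1) p := by rw [dist_comm]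
      _ < r/3 + r/3 := by linarith
      _ < r := by linarith
  have hv3 : (Tn n).2.2 ∈ Metric.ball p r ∩ K := by
    refine ⟨?_, (hinv n).1.2.2⟩
    rw [Metric.mem_ball]
    have hd : dist ((Tn n).2.2) ((Tn n).1) ≤ tdiam (Tn n) :=
      le_max_of_le_right (le_max_right _ _)
    calc dist ((Tn n).2.2) p ≤ dist ((Tn n).2.2) ((Tn n).1) + dist ((Tn n).1) p :=
          dist_triangle _ _ _
      _ < r/3 + r/3 := by linarith
      _ < r := by linarith
  have hCzero : Cint f (Tn n) = 0 := by
    have e1 := hpot _ hv1 _ hv2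
    have e2 := hpot _ hv2 _ hv3
    have e3 := hpot _ hv3 _ hv1
    simp only [Cint]
    rw [e1, e2, e3]
    ring
  have := (hinv n).2.2
  rw [hCzero] at this
  simp only [abs_zero] at this
  have h4 : (0:ℝ) < c0 / 4^n := by positivity
  linarith

lemma lineInt_chain {f : E → E} {K F : Set E} [CompleteSpace E] (hK : Convex ℝ K)
    (hf : MOn f K) (hF : F.Finite) (hmaps : Set.MapsTo f K F) (x : ℕ → E) :
    ∀ n, (∀ i, i ≤ n → x i ∈ K) →
      ∑ i ∈ Finset.range n, lineInt f (x i) (x (i+1)) = lineInt f (x 0) (x n) := by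
  intro n
  induction n with
  | zero => intro _; simp [lineInt_self]
  | succ n ih =>
    intro hx
    rw [Finset.sum_range_succ, ih (fun i hi => hx i (le_trans hi (Nat.le_succ n)))]
    have htri := lineInt_triangle hK hf hF hmaps (hx 0 (Nat.zero_le _))
      (hx n (Nat.le_succ n)) (hx (n+1) le_rfl)
    have hanti := lineInt_antisymm f (x 0) (x (n+1))
    linarith

lemma cyclic_mono {f : E → E} {K F : Set E} [CompleteSpace E] (hK : Convex ℝ K)
    (hf : MOn f K) (hF : F.Finite) (hmaps : Set.MapsTo f K F) (k : ℕ) (x : ℕ → E)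
    (hx : ∀ i, i ≤ k → x i ∈ K) (hcyc : x k = x 0) :
    0 ≤ ∑ i ∈ Finset.range k, ⟪x (i+1) - x i, f (x (i+1))⟫ := by
  have hchain := lineInt_chain hK hf hF hmaps x k hx
  rw [hcyc, lineInt_self] at hchain
  have hle : ∀ i ∈ Finset.range k,
      lineInt f (x i) (x (i+1)) ≤ ⟪x (i+1) - x i, f (x (i+1))⟫ := by
    intro i hi
    rw [Finset.mem_range] at hi
    exact lineInt_le hK hf (hx i (le_of_lt hi)) (hx (i+1) hi)
  calc (0:ℝ) = ∑ i ∈ Finset.range k, lineInt f (x i) (x (i+1)) := hchain.symm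
    _ ≤ _ := Finset.sum_le_sum hle

lemma hyperplane_null {d : ℕ} {v : EuclideanSpace ℝ (Fin d)} (hv : v ≠ 0) (c : ℝ) :
    volume {x : EuclideanSpace ℝ (Fin d) | ⟪v, x⟫ = c} = 0 := by
  classical
  set x₀ : EuclideanSpace ℝ (Fin d) := (c / ‖v‖^2) • v with hx0
  have hnv : ‖v‖ ≠ 0 := norm_ne_zero_iff.2 hv
  have hvx0 : ⟪v, x₀⟫ = c := by
    rw [hx0, real_inner_smul_right, real_inner_self_eq_norm_sq]
    field_simp
  set S : Submodule ℝ (EuclideanSpace ℝ (Fin d)) :=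
    LinearMap.ker ((innerSL ℝ v : EuclideanSpace ℝ (Fin d) →L[ℝ] ℝ) :
      EuclideanSpace ℝ (Fin d) →ₗ[ℝ] ℝ) with hS
  have hSne : S ≠ ⊤ := by
    intro htop
    have hvS : v ∈ S := by rw [htop]; trivial
    have : ⟪v, v⟫ = 0 := hvS
    exact hv (inner_self_eq_zero.1 this)
  have hset : {x : EuclideanSpace ℝ (Fin d) | ⟪v, x⟫ = c}
      = (fun y => -x₀ + y) ⁻¹' (S : Set (EuclideanSpace ℝ (Fin d))) := by
    ext x
    simp only [mem_setOf_eq, mem_preimage, SetLike.mem_coe, hS, LinearMap.mem_ker]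
    constructor
    · intro hx
      show ⟪v, -x₀ + x⟫ = 0
      rw [inner_add_right, inner_neg_right, hvx0, hx]
      ring
    · intro hx
      have : ⟪v, -x₀ + x⟫ = 0 := hx
      rw [inner_add_right, inner_neg_right, hvx0] at this
      linarith
  rw [hset, measure_preimage_add]
  exact Measure.addHaar_submodule volume S hSne

lemma exists_cycle {α : Type*} (Fs : Finset α) (m : α → α → ℝ≥0∞)
    (hfin : ∀ u v, m u v ≠ ⊤)
    (hbal : ∀ u ∈ Fs, ∑ v ∈ Fs, m u v = ∑ v ∈ Fs, m v u)
    {u₀ v₀ : α} (hu₀ : u₀ ∈ Fs) (hv₀ : v₀ ∈ Fs) (hne0 : u₀ ≠ v₀) (hpos0 : 0 < m u₀ v₀) :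
    ∃ (k : ℕ) (u : ℕ → α), 2 ≤ k ∧ (∀ n, u (n % k) = u n) ∧
      (∀ n, 0 < m (u n) (u (n+1))) ∧ u 0 ≠ u 1 := by
  classical
  set P : α × α → Prop := fun p => p.1 ∈ Fs ∧ p.2 ∈ Fs ∧ p.1 ≠ p.2 ∧ 0 < m p.1 p.2 with hP
  have hstep : ∀ p : α × α, P p → ∃ w, P (p.2, w) := by
    rintro ⟨a, b⟩ ⟨haF, hbF, hab, hpos⟩
    by_contra hcon
    push_neg at hcon
    have hzero : ∀ w ∈ Fs, b ≠ w → m b w = 0 := by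
      intro w hwF hbw
      have := hcon w
      rw [hP] at this
      simp only [not_and] at this
      have h2 := this hbF hwF hbw
      simpa using h2
    have hout : ∑ w ∈ Fs, m b w = m b b := by
      apply Finset.sum_eq_single_of_mem b hbF
      intro w hwF hwb
      exact hzero w hwF (Ne.symm hwb)
    have hin : m a b + m b b ≤ ∑ w ∈ Fs, m w b := by
      have hsub : {a, b} ⊆ Fs := by
        intro x hx
        rcases Finset.mem_insert.1 hx with rfl | hx
        · exact haF
        · rw [Finset.mem_singleton.1 hx]; exact hbF
      calc m a b + m b b = ∑ w ∈ ({a, b} : Finset α), m w b := by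
            rw [Finset.sum_pair hab]
        _ ≤ ∑ w ∈ Fs, m w b := Finset.sum_le_sum_of_subset hsub
    rw [← hbal b hbF, hout] at hin
    have hlt : m b b < m a b + m b b := by
      rw [add_comm]
      exact ENNReal.lt_add_right (hfin b b) (ne_of_gt hpos)
    exact absurd (lt_of_lt_of_le hlt hin) (lt_irrefl _)
  have hP0 : P (u₀, v₀) := ⟨hu₀, hv₀, hne0, hpos0⟩
  set chain : ℕ → {p : α × α // P p} := fun n => Nat.rec ⟨(u₀, v₀), hP0⟩
    (fun _ c => ⟨((c : {p : α × α // P p}).1.2, (hstep c.1 c.2).choose),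
      (hstep c.1 c.2).choose_spec⟩) n with hchain
  set seq : ℕ → α := fun n => (chain n).1.1 with hseq
  have hseq1 : ∀ n, seq (n+1) = (chain n).1.2 := fun n => rfl
  have hs_mem : ∀ n, seq n ∈ Fs := fun n => (chain n).2.1
  have hs_ne : ∀ n, seq n ≠ seq (n+1) := by
    intro n
    rw [hseq1]
    exact (chain n).2.2.2.1
  have hs_pos : ∀ n, 0 < m (seq n) (seq (n+1)) := by
    intro n
    rw [hseq1]
    exact (chain n).2.2.2.2
  obtain ⟨i', hi', j', hj', hij', heq'⟩ :=
    Finset.exists_ne_map_eq_of_card_lt_of_maps_to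
      (show Fs.card < (Finset.range (Fs.card + 1)).card by simp)
      (fun a _ => hs_mem a)
  obtain ⟨i, j, hlt, heq⟩ : ∃ i j, i < j ∧ seq i = seq j := by
    rcases lt_or_gt_of_ne hij' with h | h
    · exact ⟨i', j', h, heq'⟩
    · exact ⟨j', i', h, heq'.symm⟩
  set k := j - i with hk
  have hk1 : 1 ≤ k := by omega
  have hk2 : 2 ≤ k := by
    rcases Nat.lt_or_ge k 2 with h | h
    · have hj1 : j = i + 1 := by omega
      rw [hj1] at heq
      exact absurd heq (hs_ne i)
    · exact h
  have hkpos : 0 < k := by omega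
  have heqk : seq (i + k) = seq i := by
    have : i + k = j := by omega
    rw [this, heq]
  have hmod1 : ∀ n : ℕ, n % k + 1 < k → (n+1) % k = n % k + 1 := by
    intro n h
    conv_lhs => rw [Nat.add_mod]
    rw [Nat.mod_eq_of_lt (show 1 < k by omega)]
    exact Nat.mod_eq_of_lt h
  have hmod2 : ∀ n : ℕ, n % k + 1 = k → (n+1) % k = 0 := by
    intro n h
    conv_lhs => rw [Nat.add_mod]
    rw [Nat.mod_eq_of_lt (show 1 < k by omega), h, Nat.mod_self]
  refine ⟨k, fun n => seq (i + n % k), hk2, ?_, ?_, ?_⟩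
  · intro n
    show seq (i + n % k % k) = seq (i + n % k)
    rw [Nat.mod_mod_of_dvd n dvd_rfl]
  · intro n
    show 0 < m (seq (i + n % k)) (seq (i + (n+1) % k))
    rcases Nat.lt_or_ge (n % k + 1) k with h | h
    · rw [hmod1 n h, show i + (n % k + 1) = (i + n % k) + 1 from by omega]
      exact hs_pos (i + n % k)
    · have hrk1 : n % k + 1 = k := by
        have := Nat.mod_lt n hkpos
        omega
      rw [hmod2 n hrk1, show i + 0 = i from rfl, ← heqk,
        show i + k = (i + n % k) + 1 from by omega]
      exact hs_pos (i + n % k)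
  · show seq (i + 0 % k) ≠ seq (i + 1 % k)
    rw [Nat.zero_mod, Nat.mod_eq_of_lt (show 1 < k by omega)]
    simpa using hs_ne i

end SY

/-- **Uniqueness (Theorem 3).** If `μ₀⋆` is absolutely continuous with convex support `K₀⋆`
and `μ₁†` is supported on a finite set `F₁†`, then any two monotone maps from `K₀⋆` to `F₁†`
pushing `μ₀⋆` forward to `μ₁†` agree `μ₀⋆`-almost everywhere. -/
theorem monotone_pushforward_ae_unique
    (d : ℕ) (μ₀star μ₁dag : Measure (EuclideanSpace ℝ (Fin d)))
    [IsProbabilityMeasure μ₀star] [IsProbabilityMeasure μ₁dag]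
    (hac : μ₀star ≪ (volume : Measure (EuclideanSpace ℝ (Fin d))))
    (K₀star F₁dag : Set (EuclideanSpace ℝ (Fin d)))
    (hK : Convex ℝ K₀star) (hsuppK : μ₀star K₀starᶜ = 0)
    (hF : F₁dag.Finite) (hsuppF : μ₁dag F₁dagᶜ = 0)
    (T₁ T₂ : EuclideanSpace ℝ (Fin d) → EuclideanSpace ℝ (Fin d))
    (hT₁mono : MonotoneMapOn T₁ K₀star) (hT₂mono : MonotoneMapOn T₂ K₀star)
    (hT₁maps : Set.MapsTo T₁ K₀star F₁dag) (hT₂maps : Set.MapsTo T₂ K₀star F₁dag)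
    (hT₁push : μ₀star.map T₁ = μ₁dag) (hT₂push : μ₀star.map T₂ = μ₁dag) :
    T₁ =ᵐ[μ₀star] T₂ := by
  classical
  by_contra hcontra
  have hM1 : SY.MOn T₁ K₀star := hT₁mono
  have hM2 : SY.MOn T₂ K₀star := hT₂mono
  have hμ1ne : μ₁dag ≠ 0 := IsProbabilityMeasure.ne_zero μ₁dag
  have hT₁ae : AEMeasurable T₁ μ₀star := by
    by_contra h
    rw [Measure.map_of_not_aemeasurable h] at hT₁push
    exact hμ1ne hT₁push.symm
  have hT₂ae : AEMeasurable T₂ μ₀star := by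
    by_contra h
    rw [Measure.map_of_not_aemeasurable h] at hT₂push
    exact hμ1ne hT₂push.symm
  set g₁ := hT₁ae.mk T₁ with hg₁def
  set g₂ := hT₂ae.mk T₂ with hg₂def
  have hg₁m : Measurable g₁ := hT₁ae.measurable_mk
  have hg₂m : Measurable g₂ := hT₂ae.measurable_mk
  have hg₁e : T₁ =ᵐ[μ₀star] g₁ := hT₁ae.ae_eq_mk
  have hg₂e : T₂ =ᵐ[μ₀star] g₂ := hT₂ae.ae_eq_mk
  obtain ⟨N₀, hN₀s, hN₀m, hN₀0⟩ := exists_measurable_superset_of_null hsuppK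
  obtain ⟨N₁, hN₁s, hN₁m, hN₁0⟩ := exists_measurable_superset_of_null (ae_iff.1 hg₁e)
  obtain ⟨N₂, hN₂s, hN₂m, hN₂0⟩ := exists_measurable_superset_of_null (ae_iff.1 hg₂e)
  set G : Set (EuclideanSpace ℝ (Fin d)) := N₀ᶜ ∩ (N₁ᶜ ∩ N₂ᶜ) with hGdef
  have hGm : MeasurableSet G := (hN₀m.compl).inter ((hN₁m.compl).inter (hN₂m.compl))
  have hGc : μ₀star Gᶜ = 0 := by
    rw [hGdef, Set.compl_inter, Set.compl_inter, compl_compl, compl_compl, compl_compl]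
    exact measure_union_null hN₀0 (measure_union_null hN₁0 hN₂0)
  have hGK : ∀ x ∈ G, x ∈ K₀star := by
    rintro x ⟨hx0, _, _⟩
    by_contra hxK
    exact hx0 (hN₀s hxK)
  have hGT₁ : ∀ x ∈ G, T₁ x = g₁ x := by
    rintro x ⟨_, hx1, _⟩
    by_contra hxe
    exact hx1 (hN₁s hxe)
  have hGT₂ : ∀ x ∈ G, T₂ x = g₂ x := by
    rintro x ⟨_, _, hx2⟩
    by_contra hxe
    exact hx2 (hN₂s hxe)
  set Fs : Finset (EuclideanSpace ℝ (Fin d)) := hF.toFinset with hFs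
  set cell : EuclideanSpace ℝ (Fin d) → EuclideanSpace ℝ (Fin d) → Set (EuclideanSpace ℝ (Fin d)) :=
    fun u v => G ∩ g₁ ⁻¹' {u} ∩ g₂ ⁻¹' {v} with hcell
  set m : EuclideanSpace ℝ (Fin d) → EuclideanSpace ℝ (Fin d) → ℝ≥0∞ :=
    fun u v => μ₀star (cell u v) with hm
  have hcellm : ∀ u v, MeasurableSet (cell u v) := fun u v =>
    (hGm.inter (hg₁m (measurableSet_singleton u))).inter (hg₂m (measurableSet_singleton v))
  have hmfin : ∀ u v, m u v ≠ ⊤ := fun u v => measure_ne_top _ _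
  have hmargin1 : ∀ u, ∑ v ∈ Fs, m u v = μ₁dag {u} := by
    intro u
    have hdecomp : G ∩ g₁ ⁻¹' {u} = ⋃ v ∈ Fs, cell u v := by
      ext x
      simp only [mem_inter_iff, mem_preimage, mem_singleton_iff, mem_iUnion, hcell]
      constructor
      · rintro ⟨hxG, hxu⟩
        refine ⟨g₂ x, ?_, ⟨⟨hxG, hxu⟩, rfl⟩⟩
        rw [hFs, Set.Finite.mem_toFinset, ← hGT₂ x hxG]
        exact hT₂maps (hGK x hxG)
      · rintro ⟨v, hv, ⟨hxG, hxu⟩, _⟩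
        exact ⟨hxG, hxu⟩
    have hdisj : Set.PairwiseDisjoint (Fs : Set (EuclideanSpace ℝ (Fin d)))
        (fun v => cell u v) := by
      intro v1 _ v2 _ hne
      apply Set.disjoint_left.2
      rintro x ⟨_, hxv1⟩ ⟨_, hxv2⟩
      exact hne (by rw [← hxv1, ← hxv2])
    have hsum := measure_biUnion_finset (μ := μ₀star) hdisj (fun v _ => hcellm u v)
    calc ∑ v ∈ Fs, m u v = μ₀star (⋃ v ∈ Fs, cell u v) := hsum.symm
      _ = μ₀star (G ∩ g₁ ⁻¹' {u}) := by rw [← hdecomp]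
      _ = μ₀star (g₁ ⁻¹' {u}) := by rw [Set.inter_comm, measure_inter_conull hGc]
      _ = (μ₀star.map g₁) {u} := (Measure.map_apply hg₁m (measurableSet_singleton u)).symm
      _ = (μ₀star.map T₁) {u} := by rw [← Measure.map_congr hg₁e]
      _ = μ₁dag {u} := by rw [hT₁push]
  have hmargin2 : ∀ u, ∑ v ∈ Fs, m v u = μ₁dag {u} := by
    intro u
    have hdecomp : G ∩ g₂ ⁻¹' {u} = ⋃ v ∈ Fs, cell v u := by
      ext x
      simp only [mem_inter_iff, mem_preimage, mem_singleton_iff, mem_iUnion, hcell]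
      constructor
      · rintro ⟨hxG, hxu⟩
        refine ⟨g₁ x, ?_, ⟨⟨hxG, rfl⟩, hxu⟩⟩
        rw [hFs, Set.Finite.mem_toFinset, ← hGT₁ x hxG]
        exact hT₁maps (hGK x hxG)
      · rintro ⟨v, hv, ⟨hxG, _⟩, hxu⟩
        exact ⟨hxG, hxu⟩
    have hdisj : Set.PairwiseDisjoint (Fs : Set (EuclideanSpace ℝ (Fin d)))
        (fun v => cell v u) := by
      intro v1 _ v2 _ hne
      apply Set.disjoint_left.2
      rintro x ⟨⟨_, hxv1⟩, _⟩ ⟨⟨_, hxv2⟩, _⟩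
      exact hne (by rw [← hxv1, ← hxv2])
    have hsum := measure_biUnion_finset (μ := μ₀star) hdisj (fun v _ => hcellm v u)
    calc ∑ v ∈ Fs, m v u = μ₀star (⋃ v ∈ Fs, cell v u) := hsum.symm
      _ = μ₀star (G ∩ g₂ ⁻¹' {u}) := by rw [← hdecomp]
      _ = μ₀star (g₂ ⁻¹' {u}) := by rw [Set.inter_comm, measure_inter_conull hGc]
      _ = (μ₀star.map g₂) {u} := (Measure.map_apply hg₂m (measurableSet_singleton u)).symm
      _ = (μ₀star.map T₂) {u} := by rw [← Measure.map_congr hg₂e]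
      _ = μ₁dag {u} := by rw [hT₂push]
  have hbal : ∀ u ∈ Fs, ∑ v ∈ Fs, m u v = ∑ v ∈ Fs, m v u := fun u _ => by
    rw [hmargin1 u, hmargin2 u]
  have hμne : μ₀star {x | ¬ T₁ x = T₂ x} ≠ 0 := by
    intro h
    exact hcontra (ae_iff.2 h)
  obtain ⟨u₀, hu₀, v₀, hv₀, hne0, hpos0⟩ :
      ∃ u ∈ Fs, ∃ v ∈ Fs, u ≠ v ∧ 0 < m u v := by
    by_contra hcon
    push_neg at hcon
    have hzero : ∀ u ∈ Fs, ∀ v ∈ Fs, u ≠ v → m u v = 0 := by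
      intro u hu v hv huv
      have h2 := hcon u hu v hv huv
      simpa using h2
    have hsubset : {x | ¬ T₁ x = T₂ x} ⊆
        Gᶜ ∪ ⋃ u ∈ Fs, ⋃ v ∈ Fs \ {u}, cell u v := by
      intro x hx
      by_cases hxG : x ∈ G
      · right
        simp only [mem_iUnion]
        refine ⟨g₁ x, ?_, g₂ x, ?_, ⟨⟨hxG, rfl⟩, rfl⟩⟩
        · rw [hFs, Set.Finite.mem_toFinset, ← hGT₁ x hxG]
          exact hT₁maps (hGK x hxG)
        · rw [Finset.mem_sdiff]
          constructor
          · rw [hFs, Set.Finite.mem_toFinset, ← hGT₂ x hxG]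
            exact hT₂maps (hGK x hxG)
          · rw [Finset.mem_singleton]
            intro hgg
            apply hx
            rw [hGT₁ x hxG, hGT₂ x hxG, hgg]
      · left; exact hxG
    apply hμne
    apply measure_mono_null hsubset
    apply measure_union_null hGc
    refine le_antisymm ?_ zero_le
    calc μ₀star (⋃ u ∈ Fs, ⋃ v ∈ Fs \ {u}, cell u v)
        ≤ ∑ u ∈ Fs, μ₀star (⋃ v ∈ Fs \ {u}, cell u v) := measure_biUnion_finset_le _ _
      _ ≤ ∑ u ∈ Fs, ∑ v ∈ Fs \ {u}, μ₀star (cell u v) :=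
          Finset.sum_le_sum (fun u _ => measure_biUnion_finset_le _ _)
      _ = 0 := by
          apply Finset.sum_eq_zero
          intro u hu
          apply Finset.sum_eq_zero
          intro v hv
          rw [Finset.mem_sdiff, Finset.mem_singleton] at hv
          exact hzero u hu v hv.1 (fun he => hv.2 he.symm)
  obtain ⟨k, u, hk2, humod, hedge, hu01⟩ :=
    SY.exists_cycle Fs m hmfin hbal hu₀ hv₀ hne0 hpos0
  have hCpos : ∀ n, 0 < μ₀star (cell (u n) (u (n+1))) := fun n => hedge n
  have hCne : ∀ n, (cell (u n) (u (n+1))).Nonempty := fun n =>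
    nonempty_of_measure_ne_zero (ne_of_gt (hCpos n))
  set pick : ℕ → EuclideanSpace ℝ (Fin d) := fun n => (hCne n).some with hpickdef
  have hpickmem : ∀ n, pick n ∈ cell (u n) (u (n+1)) := fun n => (hCne n).some_mem
  have husucc : ∀ n, u (n % k + 1) = u (n + 1) := by
    intro n
    have h2 : (n % k + 1) % k = (n + 1) % k := by
      conv_rhs => rw [Nat.add_mod]
      rw [Nat.mod_eq_of_lt (show 1 < k by omega)]
    rw [← humod (n % k + 1), h2, humod]
  have hval : ∀ (x : EuclideanSpace ℝ (Fin d)) (n : ℕ), x ∈ cell (u n) (u (n+1)) →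
      x ∈ K₀star ∧ T₁ x = u n ∧ T₂ x = u (n+1) := by
    rintro x n ⟨⟨hxG, hx1⟩, hx2⟩
    exact ⟨hGK x hxG, by rw [hGT₁ x hxG]; exact hx1, by rw [hGT₂ x hxG]; exact hx2⟩
  set az : EuclideanSpace ℝ (Fin d) → ℕ → EuclideanSpace ℝ (Fin d) :=
    fun z n => if n % k = 0 then z else pick (n % k) with hazdef
  have haz_mem : ∀ z ∈ cell (u 0) (u 1), ∀ n, az z n ∈ cell (u n) (u (n+1)) := by
    intro z hz n
    by_cases h : n % k = 0
    · have e1 : u n = u 0 := by rw [← humod n, h]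
      have e2 : u (n+1) = u 1 := by rw [← husucc n, h]
      rw [hazdef]
      simp only [if_pos h]
      rw [e1, e2]
      exact hz
    · have e1 : u n = u (n % k) := (humod n).symm
      have e2 : u (n+1) = u (n % k + 1) := (husucc n).symm
      rw [hazdef]
      simp only [if_neg h]
      rw [e1, e2]
      exact hpickmem (n % k)
  have haz_cyc : ∀ z, az z k = az z 0 := by
    intro z
    rw [hazdef]
    simp [Nat.mod_self, Nat.zero_mod]
  have hkey : ∀ z ∈ cell (u 0) (u 1),
      ∑ i ∈ Finset.range k, ⟪az z (i+1) - az z i, u (i+1)⟫ = 0 := by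
    intro z hz
    have hmemK : ∀ i, az z i ∈ K₀star := fun i => (hval _ _ (haz_mem z hz i)).1
    have hT1val : ∀ i, T₁ (az z i) = u i := fun i => (hval _ _ (haz_mem z hz i)).2.1
    have hT2val : ∀ i, T₂ (az z i) = u (i+1) := fun i => (hval _ _ (haz_mem z hz i)).2.2
    have h1 := SY.cyclic_mono hK hM1 hF hT₁maps k (az z)
      (fun i _ => hmemK i) (haz_cyc z)
    rw [Finset.sum_congr rfl (fun i _ => by rw [hT1val (i+1)])] at h1
    have h2 := SY.cyclic_mono hK hM2 hF hT₂maps k (fun i => az z (k - i))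
      (fun i _ => hmemK (k - i)) (by simp only [Nat.sub_self, Nat.sub_zero, haz_cyc z])
    have h3 : ∑ i ∈ Finset.range k,
        ⟪az z (k - (i+1)) - az z (k - i), T₂ (az z (k - (i+1)))⟫
        = ∑ j ∈ Finset.range k, ⟪az z j - az z (j+1), T₂ (az z j)⟫ := by
      rw [← Finset.sum_range_reflect (fun j => ⟪az z j - az z (j+1), T₂ (az z j)⟫) k]
      apply Finset.sum_congr rfl
      intro i hi
      rw [Finset.mem_range] at hi
      have e1 : k - (i+1) = k - 1 - i := by omega
      have e2 : k - i = (k - 1 - i) + 1 := by omega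
      rw [e1, e2]
    rw [h3] at h2
    have h4 : ∑ j ∈ Finset.range k, ⟪az z j - az z (j+1), T₂ (az z j)⟫
        = - ∑ i ∈ Finset.range k, ⟪az z (i+1) - az z i, u (i+1)⟫ := by
      rw [← Finset.sum_neg_distrib]
      apply Finset.sum_congr rfl
      intro j _
      rw [hT2val j, ← inner_neg_left]
      congr 1
      module
    rw [h4] at h2
    linarith
  set z₀ : EuclideanSpace ℝ (Fin d) := pick 0 with hz₀def
  have hz₀mem : z₀ ∈ cell (u 0) (u 1) := hpickmem 0
  set w₀ : EuclideanSpace ℝ (Fin d) := u 0 - u 1 with hw₀def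
  have hw₀ne : w₀ ≠ 0 := sub_ne_zero.2 hu01
  have hplane : ∀ z' ∈ cell (u 0) (u 1), ⟪w₀, z'⟫ = ⟪w₀, z₀⟫ := by
    intro z' hz'
    set D : ℕ → ℝ := fun i =>
      ⟪az z₀ (i+1) - az z₀ i, u (i+1)⟫ - ⟪az z' (i+1) - az z' i, u (i+1)⟫ with hDdef
    have hDsum : ∑ i ∈ Finset.range k, D i = 0 := by
      rw [hDdef, Finset.sum_sub_distrib, hkey z₀ hz₀mem, hkey z' hz', sub_zero]
    have haz_ne : ∀ n, n % k ≠ 0 → az z₀ n = az z' n := by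
      intro n h
      rw [hazdef]
      simp only [if_neg h]
    have haz_z : ∀ (z : EuclideanSpace ℝ (Fin d)), ∀ n, n % k = 0 → az z n = z := by
      intro zz n h
      rw [hazdef]
      simp only [if_pos h]
    have h1k : (1:ℕ) % k = 1 := Nat.mod_eq_of_lt (by omega)
    have hk1k : (k-1) % k = k-1 := Nat.mod_eq_of_lt (by omega)
    have hD0 : D 0 = ⟪z' - z₀, u 1⟫ := by
      rw [hDdef]
      simp only []
      rw [haz_z z₀ 0 (Nat.zero_mod k), haz_z z' 0 (Nat.zero_mod k),
        haz_ne 1 (by omega)]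
      rw [← inner_sub_left]
      congr 1
      module
    have hDk : D (k-1) = ⟪z₀ - z', u 0⟫ := by
      have hidx : k - 1 + 1 = k := by omega
      have hu_k : u k = u 0 := by rw [← humod k, Nat.mod_self]
      rw [hDdef]
      simp only []
      rw [hidx, haz_z z₀ k (Nat.mod_self k), haz_z z' k (Nat.mod_self k),
        haz_ne (k-1) (by omega), hu_k]
      rw [← inner_sub_left]
      congr 1
      module
    have hDmid : ∀ i, 0 < i → i < k - 1 → D i = 0 := by
      intro i h0 hik
      rw [hDdef]
      simp only []
      rw [haz_ne i (by rw [Nat.mod_eq_of_lt (show i < k by omega)]; omega),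
        haz_ne (i+1) (by rw [Nat.mod_eq_of_lt (show i+1 < k by omega)]; omega)]
      ring
    have hsplit : ∑ i ∈ Finset.range k, D i = D 0 + D (k-1) := by
      have e1 : ∑ i ∈ Finset.range k, D i
          = ∑ i ∈ Finset.range (k-1), D i + D (k-1) := by
        have := Finset.sum_range_succ D (k-1)
        rw [show k - 1 + 1 = k from by omega] at this
        exact this
      have e2 : ∑ i ∈ Finset.range (k-1), D i
          = ∑ i ∈ Finset.range (k-2), D (i+1) + D 0 := by
        have := Finset.sum_range_succ' D (k-2)
        rw [show k - 2 + 1 = k - 1 from by omega] at this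
        exact this
      have e3 : ∑ i ∈ Finset.range (k-2), D (i+1) = 0 := by
        apply Finset.sum_eq_zero
        intro i hi
        rw [Finset.mem_range] at hi
        exact hDmid (i+1) (by omega) (by omega)
      rw [e1, e2, e3]
      ring
    have hfinal : ⟪z' - z₀, u 1⟫ + ⟪z₀ - z', u 0⟫ = 0 := by
      rw [← hD0, ← hDk, ← hsplit, hDsum]
    have hexp : ⟪z₀ - z', w₀⟫ = 0 := by
      rw [hw₀def, inner_sub_right]
      have hneg : ⟪z' - z₀, u 1⟫ = - ⟪z₀ - z', u 1⟫ := by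
        rw [← inner_neg_left]
        congr 1
        module
      rw [hneg] at hfinal
      linarith
    have hcomm : ⟪w₀, z₀ - z'⟫ = 0 := by
      rw [real_inner_comm]; exact hexp
    rw [inner_sub_right] at hcomm
    linarith
  have hsubplane : cell (u 0) (u 1) ⊆
      {x : EuclideanSpace ℝ (Fin d) | ⟪w₀, x⟫ = ⟪w₀, z₀⟫} := fun z' hz' => hplane z' hz'
  have hvol : volume (cell (u 0) (u 1)) = 0 :=
    measure_mono_null hsubplane (SY.hyperplane_null hw₀ne ⟪w₀, z₀⟫)
  exact absurd (hac hvol) (ne_of_gt (hCpos 0))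
end
end

section
/- Let μ_0 and μ_1 be probability measures on ℝ with μ_0 atomless. If T : ℝ → ℝ is a monotone non-decreasing map with T_# μ_0 = μ_1, then T = F_1^{-1} ∘ F_0 holds μ_0-almost everywhere, where F_0 is the cumulative distribution function of μ_0 and F_1^{-1} is the quantile function of μ_1. In particular, the monotone non-decreasing map pushing μ_0 forward to μ_1 is μ_0-a.e. unique. -/
open MeasureTheory ProbabilityTheory Set

noncomputable section

/-- The quantile function of a probability measure `μ` on `ℝ`:
`F_μ⁻¹ (q) = inf {x : ℝ | F_μ x ≥ q}`. -/
def quantileFn (μ : Measure ℝ) (q : ℝ) : ℝ :=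
  sInf {x : ℝ | q ≤ cdf μ x}

open Filter Topology

/-- The sublevel set of the cdf of an atomless measure has small measure. -/
lemma measure_cdf_le_aux (μ : Measure ℝ) [IsProbabilityMeasure μ] [NullSingletonClass μ] (q : ℝ) :
    μ {x | cdf μ x ≤ q} ≤ ENNReal.ofReal q := by
  set S : Set ℝ := {x | cdf μ x ≤ q} with hS
  rcases eq_empty_or_nonempty S with h | hne
  · simp [h]
  by_cases hbdd : BddAbove S
  · set a := sSup S with ha
    have hsub : S ⊆ Iic a := fun x hx => le_csSup hbdd hx
    have hy : ∀ y < a, cdf μ y ≤ q := by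
      intro y hy
      obtain ⟨x, hxS, hyx⟩ := exists_lt_of_lt_csSup hne hy
      exact le_trans (monotone_cdf μ hyx.le) hxS
    have hIio : μ (Iio a) ≤ ENNReal.ofReal q := by
      have hun : Iio a = ⋃ n : ℕ, Iic (a - (1 / (n + 1) : ℝ)) := by
        ext x
        simp only [mem_Iio, mem_iUnion, mem_Iic]
        constructor
        · intro hx
          obtain ⟨n, hn⟩ := exists_nat_one_div_lt (sub_pos.2 hx)
          exact ⟨n, by linarith⟩
        · rintro ⟨n, hn⟩
          have : (0 : ℝ) < 1 / (n + 1) := by positivity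
          linarith
      rw [hun, Directed.measure_iUnion]
      · refine iSup_le fun n => ?_
        rw [← ofReal_cdf]
        refine ENNReal.ofReal_le_ofReal (hy _ ?_)
        have : (0 : ℝ) < 1 / (n + 1) := by positivity
        linarith
      · refine (Monotone.directed_le ?_)
        intro m n hmn
        have hmn' : (m : ℝ) ≤ n := Nat.cast_le.2 hmn
        refine Iic_subset_Iic.2 (by
          have h1 : (1 / ((n : ℝ) + 1)) ≤ 1 / ((m : ℝ) + 1) :=
            one_div_le_one_div_of_le (by positivity) (by linarith)
          linarith)
    calc μ S ≤ μ (Iic a) := measure_mono hsub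
      _ = μ (Iio a) := (measure_congr Iio_ae_eq_Iic).symm
      _ ≤ ENNReal.ofReal q := hIio
  · -- S is a lower set unbounded above, hence S = univ and 1 ≤ q
    have huniv : S = univ := by
      ext y
      simp only [mem_univ, iff_true]
      obtain ⟨x, hxS, hyx⟩ := not_bddAbove_iff.1 hbdd y
      exact le_trans (monotone_cdf μ hyx.le) hxS
    have h1q : (1 : ℝ) ≤ q := by
      refine le_of_tendsto (tendsto_cdf_atTop μ) ?_
      filter_upwards with x
      have : x ∈ S := huniv ▸ mem_univ x
      exact this
    calc μ S ≤ 1 := prob_le_one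
      _ = ENNReal.ofReal 1 := by simp
      _ ≤ ENNReal.ofReal q := ENNReal.ofReal_le_ofReal h1q

/-- The superlevel set of the cdf of an atomless measure has small measure. -/
lemma measure_cdf_ge_aux (μ : Measure ℝ) [IsProbabilityMeasure μ] [NullSingletonClass μ] (q : ℝ) :
    μ {x | q ≤ cdf μ x} ≤ 1 - ENNReal.ofReal q := by
  set U : Set ℝ := {x | q ≤ cdf μ x} with hU
  rcases eq_empty_or_nonempty U with h | hne
  · simp [h]
  by_cases hbdd : BddBelow U
  · set a := sInf U with ha
    have hsub : U ⊆ Ici a := fun x hx => csInf_le hbdd hx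
    have hx : ∀ x, a < x → q ≤ cdf μ x := by
      intro x hx
      obtain ⟨u, huU, hux⟩ := exists_lt_of_csInf_lt hne hx
      exact le_trans huU (monotone_cdf μ hux.le)
    have hqa : q ≤ cdf μ a := by
      have htend : Tendsto (cdf μ) (𝓝[>] a) (𝓝 (cdf μ a)) :=
        ((cdf μ).right_continuous a).mono_left (nhdsWithin_mono a Ioi_subset_Ici_self)
      refine ge_of_tendsto htend ?_
      filter_upwards [self_mem_nhdsWithin] with x hxa
      exact hx x hxa
    calc μ U ≤ μ (Ici a) := measure_mono hsub
      _ = μ (Ioi a) := (measure_congr Ioi_ae_eq_Ici).symm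
      _ = 1 - μ (Iic a) := by
          rw [← compl_Iic, measure_compl measurableSet_Iic (measure_ne_top μ _), measure_univ]
      _ = 1 - ENNReal.ofReal (cdf μ a) := by rw [ofReal_cdf]
      _ ≤ 1 - ENNReal.ofReal q := tsub_le_tsub_left (ENNReal.ofReal_le_ofReal hqa) 1
  · -- U is an upper set unbounded below, hence U = univ and q ≤ 0
    have huniv : U = univ := by
      ext y
      simp only [mem_univ, iff_true]
      obtain ⟨x, hxU, hxy⟩ := not_bddBelow_iff.1 hbdd y
      exact le_trans hxU (monotone_cdf μ hxy.le)
    have hq0 : q ≤ 0 := by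
      refine ge_of_tendsto (tendsto_cdf_atBot μ) ?_
      filter_upwards with x
      have : x ∈ U := huniv ▸ mem_univ x
      exact this
    simp only [ENNReal.ofReal_eq_zero.2 hq0, tsub_zero]
    exact prob_le_one

/-- **A.e. uniqueness of the monotone transport map on `ℝ`.** If `μ₀` is atomless and
`T : ℝ → ℝ` is monotone non-decreasing with `T_# μ₀ = μ₁`, then `T = F₁⁻¹ ∘ F₀`
holds `μ₀`-almost everywhere. -/
theorem monotone_pushforward_eq_quantile_comp_cdf
    (μ₀ μ₁ : Measure ℝ) [IsProbabilityMeasure μ₀] [IsProbabilityMeasure μ₁]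
    [NullSingletonClass μ₀] (T : ℝ → ℝ) (hT : Monotone T) (hpush : μ₀.map T = μ₁) :
    T =ᵐ[μ₀] fun x => quantileFn μ₁ (cdf μ₀ x) := by
  have hTmeas : Measurable T := hT.measurable
  -- F₀(x) ≤ F₁(T x) for all x
  have hcdfle : ∀ x, cdf μ₀ x ≤ cdf μ₁ (T x) := by
    intro x
    have hmap : μ₁ (Iic (T x)) = μ₀ (T ⁻¹' Iic (T x)) := by
      rw [← hpush, Measure.map_apply hTmeas measurableSet_Iic]
    have hmono : μ₀ (Iic x) ≤ μ₀ (T ⁻¹' Iic (T x)) :=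
      measure_mono fun y (hy : y ≤ x) => (hT hy : T y ≤ T x)
    rw [cdf_eq_real, cdf_eq_real, measureReal_def, measureReal_def, hmap]
    exact ENNReal.toReal_mono (measure_ne_top _ _) hmono
  -- the bad sets A r are null
  have hA : ∀ r : ℚ, μ₀ {x | cdf μ₀ x ≤ cdf μ₁ r ∧ (r : ℝ) < T x} = 0 := by
    intro r
    set s : ℝ := cdf μ₁ r with hs
    have hsub : {x | cdf μ₀ x ≤ s ∧ (r : ℝ) < T x} ⊆
        {x | cdf μ₀ x ≤ s} ∩ {x | s ≤ cdf μ₀ x} := by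
      rintro x ⟨hx1, hx2⟩
      refine ⟨hx1, ?_⟩
      -- T⁻¹(Iic r) ⊆ Iic x
      have hpre : T ⁻¹' Iic (r : ℝ) ⊆ Iic x := by
        intro y (hy : T y ≤ r)
        by_contra hxy
        exact absurd (le_trans (hT (le_of_not_ge hxy)) hy) (not_le.2 hx2)
      have hmap : μ₁ (Iic (r : ℝ)) = μ₀ (T ⁻¹' Iic (r : ℝ)) := by
        rw [← hpush, Measure.map_apply hTmeas measurableSet_Iic]
      have : μ₁ (Iic (r : ℝ)) ≤ μ₀ (Iic x) := hmap ▸ measure_mono hpre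
      show s ≤ cdf μ₀ x
      rw [hs, cdf_eq_real, cdf_eq_real, measureReal_def, measureReal_def]
      exact ENNReal.toReal_mono (measure_ne_top _ _) this
    have hmeasU : MeasurableSet {x | s ≤ cdf μ₀ x} := by
      have : {x | s ≤ cdf μ₀ x} = cdf μ₀ ⁻¹' Ici s := rfl
      rw [this]
      exact ((monotone_cdf μ₀).measurable) measurableSet_Ici
    have hkey := measure_union_add_inter (μ := μ₀) {x | cdf μ₀ x ≤ s} hmeasU
    have hcover : {x | cdf μ₀ x ≤ s} ∪ {x | s ≤ cdf μ₀ x} = univ := by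
      ext x; simpa using le_total (cdf μ₀ x) s
    rw [hcover, measure_univ] at hkey
    have hsum : μ₀ {x | cdf μ₀ x ≤ s} + μ₀ {x | s ≤ cdf μ₀ x} ≤ 1 := by
      calc μ₀ {x | cdf μ₀ x ≤ s} + μ₀ {x | s ≤ cdf μ₀ x}
          ≤ ENNReal.ofReal s + (1 - ENNReal.ofReal s) :=
            add_le_add (measure_cdf_le_aux μ₀ s) (measure_cdf_ge_aux μ₀ s)
        _ = 1 := by
            rw [add_tsub_cancel_of_le]
            calc ENNReal.ofReal s ≤ ENNReal.ofReal 1 :=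
                  ENNReal.ofReal_le_ofReal (cdf_le_one μ₁ _)
              _ = 1 := by simp
    have hint : μ₀ ({x | cdf μ₀ x ≤ s} ∩ {x | s ≤ cdf μ₀ x}) = 0 := by
      by_contra h
      have hpos : 0 < μ₀ ({x | cdf μ₀ x ≤ s} ∩ {x | s ≤ cdf μ₀ x}) := pos_iff_ne_zero.2 h
      have : (1 : ENNReal) < 1 + μ₀ ({x | cdf μ₀ x ≤ s} ∩ {x | s ≤ cdf μ₀ x}) :=
        ENNReal.lt_add_right ENNReal.one_ne_top h
      rw [hkey] at this
      exact absurd hsum (not_le.2 this)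
    exact measure_mono_null hsub hint
  -- decompose the bad set
  have hincl : {x | T x ≠ quantileFn μ₁ (cdf μ₀ x)} ⊆
      {x | cdf μ₀ x ≤ 0} ∪ ⋃ r : ℚ, {x | cdf μ₀ x ≤ cdf μ₁ r ∧ (r : ℝ) < T x} := by
    intro x hx
    by_cases h0 : cdf μ₀ x ≤ 0
    · exact Or.inl h0
    push_neg at h0
    right
    have hmem : T x ∈ {z | cdf μ₀ x ≤ cdf μ₁ z} := hcdfle x
    have hbdd : BddBelow {z | cdf μ₀ x ≤ cdf μ₁ z} := by
      obtain ⟨b, hb⟩ := ((tendsto_cdf_atBot μ₁).eventually_lt_const h0).exists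
      refine ⟨b, fun z hz => ?_⟩
      by_contra hzb
      exact absurd (le_trans hz (monotone_cdf μ₁ (le_of_not_ge hzb))) (not_le.2 hb)
    have hle : quantileFn μ₁ (cdf μ₀ x) ≤ T x := csInf_le hbdd hmem
    have hlt : quantileFn μ₁ (cdf μ₀ x) < T x := lt_of_le_of_ne hle (Ne.symm hx)
    obtain ⟨r, hr1, hr2⟩ := exists_rat_btwn hlt
    obtain ⟨z, hzmem, hzr⟩ := exists_lt_of_csInf_lt ⟨T x, hmem⟩ hr1
    refine mem_iUnion.2 ⟨r, ⟨le_trans hzmem (monotone_cdf μ₁ hzr.le), hr2⟩⟩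
  -- conclude
  have h0 : μ₀ {x | cdf μ₀ x ≤ 0} = 0 := by
    have := measure_cdf_le_aux μ₀ 0
    simpa using this
  have hbad : μ₀ {x | T x ≠ quantileFn μ₁ (cdf μ₀ x)} = 0 :=
    measure_mono_null hincl
      (measure_union_null h0 (measure_iUnion_null fun r => hA r))
  exact hbad
end
end
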